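/- arXiv:0709.1787 — 2 statements merged into one kernel-verified Lean document; each statement's English description precedes it below -/
import Mathlib

section
/- Let $c > 1$ and $\epsilon > 0$. Then there exists $\delta > 0$ such that, with probability tending to $1$ as $n \to \infty$, the Erdős–Rényi random graph $G \in \mathcal{G}(n, c/n)$ satisfies $\nu(G, \mathcal{C}_{\lfloor \delta n \rfloor}) \le \nu(G, \mathcal{C}_{\lfloor 1/\delta \rfloor}) + \epsilon$. -/
open SimpleGraph Filter

/-- The probability, in the Erdős–Rényi model `𝒢(n, p)` (each of the `n.choose 2` possible
edges present independently with probability `p`), that the random graph lies in the set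
`A` of graphs on `{1, …, n}`. -/
noncomputable def erProb (n : ℕ) (p : ℝ) (A : Set (SimpleGraph (Fin n))) : ℝ :=
  ∑ G : SimpleGraph (Fin n),
    A.indicator (fun G => p ^ G.edgeSet.ncard * (1 - p) ^ (n.choose 2 - G.edgeSet.ncard)) G

/-- `N(G, 𝒞_k)`: the largest size of a vertex set `S` such that every connected component
of the induced subgraph `G[S]` has at most `k` vertices. -/
noncomputable def NC {V : Type*} [Fintype V] (G : SimpleGraph V) (k : ℕ) : ℕ :=
  sSup {m | ∃ S : Set V, m = S.ncard ∧
    ∀ v : S, (((G.induce S).connectedComponentMk v).supp).ncard ≤ k}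

set_option linter.unusedSectionVars false
set_option maxHeartbeats 2000000

open SimpleGraph Filter Finset

attribute [local instance] Classical.propDecidable

noncomputable section

/-- Edge slots: potential edges on `Fin n`. -/
abbrev ESlot (n : ℕ) := {e : Sym2 (Fin n) // ¬ e.IsDiag}

/-- The set of present edges of a graph, as a finset of slots. -/
def slots (n : ℕ) (G : SimpleGraph (Fin n)) : Finset (ESlot n) :=
  Finset.univ.filter (fun e => e.1 ∈ G.edgeSet)

lemma mem_slots {n : ℕ} {G : SimpleGraph (Fin n)} {e : ESlot n} :
    e ∈ slots n G ↔ e.1 ∈ G.edgeSet := by simp [slots]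

lemma card_slots {n : ℕ} (G : SimpleGraph (Fin n)) :
    (slots n G).card = G.edgeSet.ncard := by
  classical
  have h1 : (slots n G).image Subtype.val = G.edgeSet.toFinset := by
    ext e
    simp only [Finset.mem_image, Set.mem_toFinset]
    constructor
    · rintro ⟨a, ha, rfl⟩; exact mem_slots.1 ha
    · intro he
      exact ⟨⟨e, G.not_isDiag_of_mem_edgeSet he⟩, mem_slots.2 he, rfl⟩
  have h2 : ((slots n G).image Subtype.val).card = (slots n G).card :=
    Finset.card_image_of_injective _ Subtype.val_injective
  rw [Set.ncard_eq_toFinset_card', ← h1, h2]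

lemma slots_bijective (n : ℕ) : Function.Bijective (slots n) := by
  constructor
  · intro G G' h
    ext v w
    constructor <;> intro hadj
    · have hne : ¬ (s(v,w) : Sym2 (Fin n)).IsDiag := by
        simp [Sym2.isDiag_iff_proj_eq]; exact fun hvw => (G.loopless.irrefl v (hvw ▸ hadj))
      have : (⟨s(v,w), hne⟩ : ESlot n) ∈ slots n G := mem_slots.2 (G.mem_edgeSet.2 hadj)
      rw [h] at this
      exact G'.mem_edgeSet.1 (mem_slots.1 this)
    · have hne : ¬ (s(v,w) : Sym2 (Fin n)).IsDiag := by
        simp [Sym2.isDiag_iff_proj_eq]; exact fun hvw => (G'.loopless.irrefl v (hvw ▸ hadj))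
      have : (⟨s(v,w), hne⟩ : ESlot n) ∈ slots n G' := mem_slots.2 (G'.mem_edgeSet.2 hadj)
      rw [← h] at this
      exact G.mem_edgeSet.1 (mem_slots.1 this)
  · intro s
    refine ⟨SimpleGraph.fromEdgeSet (Subtype.val '' (s : Set (ESlot n))), ?_⟩
    ext e
    rw [mem_slots, SimpleGraph.edgeSet_fromEdgeSet]
    simp only [Set.mem_diff, Set.mem_image, Set.mem_setOf_eq]
    constructor
    · rintro ⟨⟨a, ha, hval⟩, _⟩
      rwa [← Subtype.ext hval.symm] at ha
    · intro he
      exact ⟨⟨e, he, rfl⟩, e.2⟩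

/-- The binomial identity: the weights sum to 1 over any finite slot set. -/
lemma sum_pow_powerset {α : Type*} [DecidableEq α] (u : Finset α) (p : ℝ) :
    ∑ t ∈ u.powerset, p ^ t.card * (1 - p) ^ (u.card - t.card) = 1 := by
  have h := Finset.prod_add (fun _ : α => p) (fun _ => 1 - p) u
  simp only [Finset.prod_const, add_sub_cancel, one_pow] at h
  have h2 : ∑ t ∈ u.powerset, p ^ t.card * (1 - p) ^ (u.card - t.card)
      = ∑ t ∈ u.powerset, p ^ t.card * (1 - p) ^ (u \ t).card := by
    apply Finset.sum_congr rfl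
    intro t ht
    rw [Finset.card_sdiff_of_subset (Finset.mem_powerset.1 ht)]
  rw [h2, ← h]

/-- The weight of a graph. -/
def gwt (n : ℕ) (p : ℝ) (G : SimpleGraph (Fin n)) : ℝ :=
  p ^ (slots n G).card * (1 - p) ^ (n.choose 2 - (slots n G).card)

lemma card_univ_eslot (n : ℕ) : (Finset.univ : Finset (ESlot n)).card = n.choose 2 := by
  classical
  rw [Finset.card_univ]
  have := Sym2.card_subtype_not_diag (α := Fin n)
  simpa using this

lemma sum_gwt (n : ℕ) (p : ℝ) : ∑ G : SimpleGraph (Fin n), gwt n p G = 1 := by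
  classical
  rw [Fintype.sum_bijective (slots n) (slots_bijective n)
      (gwt n p) (fun s => p ^ s.card * (1 - p) ^ (n.choose 2 - s.card)) (fun G => rfl)]
  have h := sum_pow_powerset (Finset.univ : Finset (ESlot n)) p
  rw [Finset.powerset_univ, card_univ_eslot] at h
  exact h

lemma erProbDef (n : ℕ) (p : ℝ) (A : Set (SimpleGraph (Fin n))) :
    (∑ G : SimpleGraph (Fin n),
      A.indicator (fun G => p ^ G.edgeSet.ncard * (1 - p) ^ (n.choose 2 - G.edgeSet.ncard)) G)
    = ∑ G : SimpleGraph (Fin n), A.indicator (gwt n p) G := by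
  apply Finset.sum_congr rfl
  intro G _
  unfold Set.indicator
  split
  · unfold gwt; rw [card_slots]
  · rfl

section probs
variable {n : ℕ} {p : ℝ} (hp0 : 0 ≤ p) (hp1 : p ≤ 1)

include hp0 hp1 in
lemma gwt_nonneg (G : SimpleGraph (Fin n)) : 0 ≤ gwt n p G := by
  unfold gwt
  have : (0:ℝ) ≤ 1 - p := by linarith
  positivity

/-- abbreviation for the probability sum. -/
def pr (n : ℕ) (p : ℝ) (A : Set (SimpleGraph (Fin n))) : ℝ :=
  ∑ G : SimpleGraph (Fin n), A.indicator (gwt n p) G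

lemma pr_add_compl (A : Set (SimpleGraph (Fin n))) : pr n p A + pr n p Aᶜ = 1 := by
  unfold pr
  rw [← Finset.sum_add_distrib]
  calc ∑ G : SimpleGraph (Fin n), (A.indicator (gwt n p) G + Aᶜ.indicator (gwt n p) G)
      = ∑ G : SimpleGraph (Fin n), gwt n p G := by
        apply Finset.sum_congr rfl
        intro G _
        by_cases h : G ∈ A
        · simp [Set.indicator_of_mem h, Set.indicator_of_notMem (by simpa using h : G ∉ Aᶜ)]
        · simp [Set.indicator_of_notMem h, Set.indicator_of_mem (by simpa using h : G ∈ Aᶜ)]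
    _ = 1 := sum_gwt n p

include hp0 hp1 in
lemma pr_nonneg (A : Set (SimpleGraph (Fin n))) : 0 ≤ pr n p A := by
  apply Finset.sum_nonneg
  intro G _
  exact Set.indicator_nonneg (fun x _ => gwt_nonneg hp0 hp1 x) G

include hp0 hp1 in
lemma pr_mono {A B : Set (SimpleGraph (Fin n))} (h : A ⊆ B) : pr n p A ≤ pr n p B := by
  apply Finset.sum_le_sum
  intro G _
  exact Set.indicator_le_indicator_of_subset h (fun x => gwt_nonneg hp0 hp1 x) G

include hp0 hp1 in
lemma pr_le_one (A : Set (SimpleGraph (Fin n))) : pr n p A ≤ 1 := by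
  have := pr_add_compl (n := n) (p := p) A
  have h2 := pr_nonneg hp0 hp1 (n := n) (p := p) Aᶜ
  linarith

include hp0 hp1 in
lemma pr_union_le (A B : Set (SimpleGraph (Fin n))) :
    pr n p (A ∪ B) ≤ pr n p A + pr n p B := by
  unfold pr
  rw [← Finset.sum_add_distrib]
  apply Finset.sum_le_sum
  intro G _
  by_cases h : G ∈ A ∪ B
  · rw [Set.indicator_of_mem h]
    rcases h with h | h
    · have := Set.indicator_nonneg (s := B) (fun x _ => gwt_nonneg hp0 hp1 x) G
      rw [Set.indicator_of_mem h]
      linarith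
    · have := Set.indicator_nonneg (s := A) (fun x _ => gwt_nonneg hp0 hp1 x) G
      rw [Set.indicator_of_mem h]
      linarith
  · rw [Set.indicator_of_notMem h]
    have h1 := Set.indicator_nonneg (s := A) (fun x _ => gwt_nonneg hp0 hp1 x) G
    have h2 := Set.indicator_nonneg (s := B) (fun x _ => gwt_nonneg hp0 hp1 x) G
    linarith

include hp0 hp1 in
lemma pr_biUnion_le {ι : Type*} (I : Finset ι) (B : ι → Set (SimpleGraph (Fin n))) :
    pr n p (⋃ i ∈ I, B i) ≤ ∑ i ∈ I, pr n p (B i) := by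
  classical
  induction I using Finset.induction_on with
  | empty =>
      simp only [Finset.sum_empty, Set.iUnion_false, Set.iUnion_empty]
      have : (⋃ i ∈ (∅ : Finset ι), B i) = (∅ : Set (SimpleGraph (Fin n))) := by simp
      rw [this]
      unfold pr
      simp
  | insert _ _ hx ih =>
      rename_i a s
      rw [Finset.sum_insert hx]
      have : (⋃ i ∈ insert a s, B i) = B a ∪ ⋃ i ∈ s, B i := by
        simp [Set.biUnion_insert]
      rw [this]
      calc pr n p (B a ∪ ⋃ i ∈ s, B i) ≤ pr n p (B a) + pr n p (⋃ i ∈ s, B i) :=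
            pr_union_le hp0 hp1 _ _
        _ ≤ pr n p (B a) + ∑ i ∈ s, pr n p (B i) := by linarith

/-- Probability that a fixed set of edges is present equals `p ^ |F|`. -/
lemma pr_edges_present (F : Finset (ESlot n)) :
    pr n p {G | F ⊆ slots n G} = p ^ F.card := by
  classical
  unfold pr
  rw [Fintype.sum_bijective (slots n) (slots_bijective n)
      _ (fun s => if F ⊆ s then p ^ s.card * (1 - p) ^ (n.choose 2 - s.card) else 0)
      (fun G => by
        show Set.indicator {G | F ⊆ slots n G} (gwt n p) G
            = if F ⊆ slots n G then
                p ^ (slots n G).card * (1 - p) ^ (n.choose 2 - (slots n G).card) else 0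
        by_cases h : F ⊆ slots n G
        · rw [Set.indicator_of_mem (by exact h), if_pos h]; rfl
        · rw [Set.indicator_of_notMem (by exact h), if_neg h])]
  rw [← Finset.sum_filter]
  have hbij : ∑ s ∈ Finset.univ.filter (fun s : Finset (ESlot n) => F ⊆ s),
        p ^ s.card * (1 - p) ^ (n.choose 2 - s.card)
      = ∑ t ∈ (Finset.univ \ F).powerset,
        p ^ (F ∪ t).card * (1 - p) ^ (n.choose 2 - (F ∪ t).card) := by
    apply Finset.sum_nbij' (fun s => s \ F) (fun t => F ∪ t)
    · intro s hs
      simp only [Finset.mem_filter] at hs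
      simp only [Finset.mem_powerset]
      intro x hx
      simp only [Finset.mem_sdiff] at hx ⊢
      exact ⟨Finset.mem_univ x, hx.2⟩
    · intro t ht
      simp only [Finset.mem_filter]
      exact ⟨Finset.mem_univ _, Finset.subset_union_left⟩
    · intro s hs
      simp only [Finset.mem_filter] at hs
      rw [Finset.union_sdiff_of_subset hs.2]
    · intro t ht
      simp only [Finset.mem_powerset] at ht
      have hd : Disjoint F t := by
        rw [Finset.disjoint_left]
        intro x hxF hxt
        have := ht hxt
        simp only [Finset.mem_sdiff] at this
        exact this.2 hxF
      rw [Finset.union_sdiff_cancel_left hd]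
    · intro s hs
      simp only [Finset.mem_filter] at hs
      rw [Finset.union_sdiff_of_subset hs.2]
  rw [hbij]
  have hcard : ∀ t ∈ (Finset.univ \ F).powerset, (F ∪ t).card = F.card + t.card := by
    intro t ht
    simp only [Finset.mem_powerset] at ht
    have hd : Disjoint F t := by
      rw [Finset.disjoint_left]
      intro x hxF hxt
      have := ht hxt
      simp only [Finset.mem_sdiff] at this
      exact this.2 hxF
    rw [Finset.card_union_of_disjoint hd]
  have hF : F.card ≤ n.choose 2 := by
    rw [← card_univ_eslot n]
    exact Finset.card_le_card (Finset.subset_univ F)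
  have hcard2 : (Finset.univ \ F).card = n.choose 2 - F.card := by
    rw [Finset.card_sdiff_of_subset (Finset.subset_univ F), card_univ_eslot]
  calc ∑ t ∈ (Finset.univ \ F).powerset,
        p ^ (F ∪ t).card * (1 - p) ^ (n.choose 2 - (F ∪ t).card)
      = ∑ t ∈ (Finset.univ \ F).powerset,
        p ^ F.card * (p ^ t.card * (1 - p) ^ ((Finset.univ \ F).card - t.card)) := by
        apply Finset.sum_congr rfl
        intro t ht
        have he : n.choose 2 - (F.card + t.card) = (Finset.univ \ F).card - t.card := by
          rw [hcard2]; omega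
        rw [hcard t ht, he, pow_add, mul_assoc]
    _ = p ^ F.card := by
        rw [← Finset.mul_sum, sum_pow_powerset, mul_one]

end probs
end


open Filter Finset

/-- `(s/3)^s ≤ s!` -/
lemma pow_div_three_le_factorial : ∀ s : ℕ, ((s : ℝ)/3)^s ≤ s.factorial := by
  intro s
  induction s with
  | zero => simp
  | succ m ih =>
      rcases Nat.eq_zero_or_pos m with hm | hm
      · subst hm; norm_num
      have hm0 : (0:ℝ) < m := by exact_mod_cast hm
      have key : ((m+1 : ℝ)/3)^(m+1) ≤ (m+1 : ℝ) * ((m:ℝ)/3)^m := by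
        have h1 : ((m+1 : ℝ)/3)^(m+1) = ((m+1:ℝ)/3) * ((m+1:ℝ)/3)^m := by ring
        have h2 : ((m+1:ℝ)/3)^m = ((m+1:ℝ)/(m:ℝ))^m * ((m:ℝ)/3)^m := by
          rw [← mul_pow]
          congr 1
          field_simp
        have h3 : ((m+1:ℝ)/(m:ℝ))^m ≤ 3 := by
          have : ((m+1:ℝ)/(m:ℝ)) = 1 + 1/(m:ℝ) := by field_simp
          rw [this]
          have h4 : (1 + 1/(m:ℝ))^m ≤ Real.exp (1/(m:ℝ))^m := by
            apply pow_le_pow_left₀ (by positivity)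
            have := Real.add_one_le_exp (1/(m:ℝ))
            linarith
          have h5 : Real.exp (1/(m:ℝ))^m = Real.exp ((1/(m:ℝ))*m) := by
            rw [← Real.exp_nat_mul]; ring_nf
          have h6 : (1/(m:ℝ))*m = 1 := by field_simp
          have h7 : Real.exp 1 ≤ 3 := by
            have := Real.exp_one_lt_d9
            linarith
          calc (1 + 1/(m:ℝ))^m ≤ Real.exp (1/(m:ℝ))^m := h4
            _ = Real.exp 1 := by rw [h5, h6]
            _ ≤ 3 := h7
        calc ((m+1 : ℝ)/3)^(m+1) = ((m+1:ℝ)/3) * (((m+1:ℝ)/(m:ℝ))^m * ((m:ℝ)/3)^m) := by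
              rw [h1, h2]
          _ ≤ ((m+1:ℝ)/3) * (3 * ((m:ℝ)/3)^m) := by
              apply mul_le_mul_of_nonneg_left _ (by positivity)
              apply mul_le_mul_of_nonneg_right h3 (by positivity)
          _ = (m+1:ℝ) * ((m:ℝ)/3)^m := by ring
      calc ((↑(m+1) : ℝ)/3)^(m+1) = ((m+1 : ℝ)/3)^(m+1) := by push_cast; ring_nf
        _ ≤ (m+1 : ℝ) * ((m:ℝ)/3)^m := key
        _ ≤ (m+1 : ℝ) * (m.factorial : ℝ) := by
            apply mul_le_mul_of_nonneg_left ih (by positivity)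
        _ = ((m+1).factorial : ℝ) := by
            rw [Nat.factorial_succ]; push_cast; ring

/-- The main analytic estimate: the union bound sum tends to 0. -/
lemma bad_sum_tendsto_zero (c : ℝ) (hc : 1 < c) (K : ℕ) (hK : 1 ≤ K) (δ : ℝ) (hδ0 : 0 < δ)
    (hδ : (9*c)^K * (3*δ*c) ≤ 1/2) :
    Tendsto (fun n : ℕ => ∑ s ∈ Finset.Icc (K+1) (⌊δ * n⌋₊),
      (n.choose s : ℝ) * (((s^2).choose (s + s/K + 1)) : ℝ) * (c/n)^(s + s/K + 1))
      atTop (nhds 0) := by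
  have hc0 : (0:ℝ) < c := by linarith
  set rr : ℝ := ((1:ℝ)/2) ^ ((K:ℝ)⁻¹) with hrr
  have hK0 : (0:ℝ) < (K:ℝ) := by exact_mod_cast hK
  have hrr0 : 0 < rr := Real.rpow_pos_of_pos (by norm_num) _
  have hrr1 : rr < 1 := by
    rw [hrr]
    apply Real.rpow_lt_one (by norm_num) (by norm_num)
    positivity
  -- summability of s * rr^s
  have hsum : Summable (fun s : ℕ => (s:ℝ) * rr^s) := by
    have := hasSum_coe_mul_geometric_of_norm_lt_one (𝕜 := ℝ) (r := rr)
      (by rw [Real.norm_eq_abs, abs_of_pos hrr0]; exact hrr1)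
    exact this.summable
  set T : ℝ := ∑' s : ℕ, (s:ℝ) * rr^s with hT
  have hTnn : 0 ≤ T := tsum_nonneg (fun s => by positivity)
  set Cst : ℝ := (9*c)^K * (3*c) * 2 with hCst
  have hCst0 : 0 ≤ Cst := by positivity
  -- termwise bound
  have hterm : ∀ n : ℕ, 1 ≤ n → ∀ s ∈ Finset.Icc (K+1) (⌊δ * n⌋₊),
      (n.choose s : ℝ) * (((s^2).choose (s + s/K + 1)) : ℝ) * (c/n)^(s + s/K + 1)
        ≤ Cst * ((s:ℝ)/n) * rr^s := by
    intro n hn s hs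
    rw [Finset.mem_Icc] at hs
    obtain ⟨hs1, hs2⟩ := hs
    have hsK : K + 1 ≤ s := hs1
    have hs0 : 0 < s := by omega
    have hsR : (0:ℝ) < s := by exact_mod_cast hs0
    have hnR : (0:ℝ) < n := by exact_mod_cast hn
    have hsδ : (s:ℝ) ≤ δ * n := by
      calc (s:ℝ) ≤ (⌊δ * n⌋₊ : ℝ) := by exact_mod_cast hs2
        _ ≤ δ * n := Nat.floor_le (by positivity)
    set t : ℕ := s + s/K + 1 with ht
    set q : ℕ := s/K with hq
    have hts : s ≤ t := by rw [ht]; exact Nat.le_succ_of_le (Nat.le_add_right s q)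
    have hslt : s < K * (q + 1) := by
      have h1 : K * q + s % K = s := Nat.div_add_mod s K
      have h2 : s % K < K := Nat.mod_lt s (by omega)
      have h3 : K * (q+1) = K * q + K := by ring
      omega
    -- choose bounds
    have h1 : (n.choose s : ℝ) ≤ (n:ℝ)^s / (s.factorial : ℝ) := Nat.choose_le_pow_div s n
    have h2 : (((s^2).choose t) : ℝ) ≤ ((s^2 : ℕ):ℝ)^t / (t.factorial : ℝ) :=
      Nat.choose_le_pow_div t (s^2)
    have h3 : ((s:ℝ)/3)^s ≤ (s.factorial : ℝ) := pow_div_three_le_factorial s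
    have h4 : ((s:ℝ)/3)^t ≤ (t.factorial : ℝ) := by
      calc ((s:ℝ)/3)^t ≤ ((t:ℝ)/3)^t := by
            apply pow_le_pow_left₀ (by positivity)
            have : (s:ℝ) ≤ t := by exact_mod_cast hts
            linarith
        _ ≤ (t.factorial : ℝ) := pow_div_three_le_factorial t
    have hs3 : (0:ℝ) < ((s:ℝ)/3)^s := by positivity
    have ht3 : (0:ℝ) < ((s:ℝ)/3)^t := by positivity
    have hfs : (0:ℝ) < (s.factorial : ℝ) := by exact_mod_cast s.factorial_pos
    have hft : (0:ℝ) < (t.factorial : ℝ) := by exact_mod_cast t.factorial_pos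
    have h5 : (n:ℝ)^s / (s.factorial : ℝ) ≤ (3*n/s)^s := by
      rw [div_le_iff₀ hfs]
      calc (n:ℝ)^s = (3*(n:ℝ)/s)^s * ((s:ℝ)/3)^s := by
            rw [← mul_pow]; congr 1; field_simp
        _ ≤ (3*(n:ℝ)/s)^s * (s.factorial : ℝ) := by
            apply mul_le_mul_of_nonneg_left h3 (by positivity)
    have h6 : ((s^2 : ℕ):ℝ)^t / (t.factorial : ℝ) ≤ (3*s)^t := by
      rw [div_le_iff₀ hft]
      calc ((s^2 : ℕ):ℝ)^t = (3*(s:ℝ))^t * ((s:ℝ)/3)^t := by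
            rw [← mul_pow]; congr 1; push_cast; field_simp
        _ ≤ (3*(s:ℝ))^t * (t.factorial : ℝ) := by
            apply mul_le_mul_of_nonneg_left h4 (by positivity)
    have hch1 : (0:ℝ) ≤ (n.choose s : ℝ) := by positivity
    have hcp : (0:ℝ) ≤ (c/n)^t := by positivity
    have step1 : (n.choose s : ℝ) * (((s^2).choose t) : ℝ) * (c/n)^t
        ≤ (3*(n:ℝ)/s)^s * (3*(s:ℝ))^t * (c/n)^t := by
      apply mul_le_mul_of_nonneg_right _ hcp
      apply mul_le_mul (le_trans h1 h5) (le_trans h2 h6) (by positivity) (by positivity)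
    have step2 : (3*(n:ℝ)/s)^s * (3*(s:ℝ))^t * (c/n)^t
        = (9*c)^s * (3*(s:ℝ)*c/n)^(q+1) := by
      have e1 : (3*(s:ℝ))^t * (c/n)^t = (3*(s:ℝ)*c/n)^t := by
        rw [← mul_pow]; congr 1; field_simp
      have e2 : (3*(s:ℝ)*c/n)^t = (3*(s:ℝ)*c/n)^s * (3*(s:ℝ)*c/n)^(q+1) := by
        rw [← pow_add]; congr 1
      have e3 : (3*(n:ℝ)/s)^s * (3*(s:ℝ)*c/n)^s = (9*c)^s := by
        rw [← mul_pow]; congr 1; field_simp; ring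
      calc (3*(n:ℝ)/s)^s * (3*(s:ℝ))^t * (c/n)^t
          = (3*(n:ℝ)/s)^s * ((3*(s:ℝ))^t * (c/n)^t) := by ring
        _ = (3*(n:ℝ)/s)^s * ((3*(s:ℝ)*c/n)^s * (3*(s:ℝ)*c/n)^(q+1)) := by rw [e1, e2]
        _ = (9*c)^s * (3*(s:ℝ)*c/n)^(q+1) := by rw [← mul_assoc, e3]
    have hx0 : (0:ℝ) ≤ 3*(s:ℝ)*c/n := by positivity
    have hxδ : 3*(s:ℝ)*c/n ≤ 3*δ*c := by
      rw [div_le_iff₀ hnR]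
      nlinarith [hsδ]
    have h9c : (1:ℝ) ≤ 9*c := by linarith
    have hsq : s ≤ K*(q+1) := le_of_lt hslt
    have step3 : (9*c)^s ≤ ((9*c)^K)^(q+1) := by
      rw [← pow_mul]
      exact pow_le_pow_right₀ h9c hsq
    have step4 : ((9*c)^K)^(q+1) * (3*(s:ℝ)*c/n)^(q+1) = ((9*c)^K * (3*(s:ℝ)*c/n))^(q+1) := by
      rw [← mul_pow]
    have hxx0 : (0:ℝ) ≤ (9*c)^K * (3*(s:ℝ)*c/n) := by positivity
    have hxxhalf : (9*c)^K * (3*(s:ℝ)*c/n) ≤ 1/2 := by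
      calc (9*c)^K * (3*(s:ℝ)*c/n) ≤ (9*c)^K * (3*δ*c) := by
            apply mul_le_mul_of_nonneg_left hxδ (by positivity)
        _ ≤ 1/2 := hδ
    have step5 : ((9*c)^K * (3*(s:ℝ)*c/n))^(q+1)
        ≤ (1/2:ℝ)^q * ((9*c)^K * (3*(s:ℝ)*c/n)) := by
      rw [pow_succ]
      apply mul_le_mul_of_nonneg_right _ hxx0
      exact pow_le_pow_left₀ hxx0 hxxhalf q
    -- (1/2)^q ≤ 2 * rr^s
    have step6 : (1/2:ℝ)^q ≤ 2 * rr^s := by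
      have hq1 : (s:ℝ)/K - 1 ≤ (q:ℝ) := by
        have h2 : (s:ℝ) < (K:ℝ) * ((q:ℝ)+1) := by exact_mod_cast hslt
        rw [sub_le_iff_le_add, div_le_iff₀ hK0]
        nlinarith
      have e1 : ((1:ℝ)/2)^q = ((1:ℝ)/2) ^ ((q:ℕ):ℝ) := by
        rw [Real.rpow_natCast]
      have e2 : ((1:ℝ)/2) ^ ((q:ℕ):ℝ) ≤ ((1:ℝ)/2) ^ ((s:ℝ)/K - 1) :=
        Real.rpow_le_rpow_of_exponent_ge (by norm_num) (by norm_num) hq1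
      have e3 : ((1:ℝ)/2) ^ ((s:ℝ)/K - 1) = 2 * ((1:ℝ)/2) ^ ((s:ℝ)/K) := by
        rw [Real.rpow_sub (by norm_num), Real.rpow_one]
        ring
      have e4 : ((1:ℝ)/2) ^ ((s:ℝ)/K) = rr^s := by
        rw [hrr, ← Real.rpow_natCast (((1:ℝ)/2) ^ ((K:ℝ)⁻¹)) s, ← Real.rpow_mul (by norm_num)]
        congr 1
        field_simp
      rw [e1]
      calc ((1:ℝ)/2) ^ ((q:ℕ):ℝ) ≤ ((1:ℝ)/2) ^ ((s:ℝ)/K - 1) := e2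
        _ = 2 * ((1:ℝ)/2) ^ ((s:ℝ)/K) := e3
        _ = 2 * rr^s := by rw [e4]
    -- assemble
    calc (n.choose s : ℝ) * (((s^2).choose t) : ℝ) * (c/n)^t
        ≤ (3*(n:ℝ)/s)^s * (3*(s:ℝ))^t * (c/n)^t := step1
      _ = (9*c)^s * (3*(s:ℝ)*c/n)^(q+1) := step2
      _ ≤ ((9*c)^K)^(q+1) * (3*(s:ℝ)*c/n)^(q+1) := by
          apply mul_le_mul_of_nonneg_right step3 (by positivity)
      _ = ((9*c)^K * (3*(s:ℝ)*c/n))^(q+1) := step4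
      _ ≤ (1/2:ℝ)^q * ((9*c)^K * (3*(s:ℝ)*c/n)) := step5
      _ ≤ (2 * rr^s) * ((9*c)^K * (3*(s:ℝ)*c/n)) := by
          apply mul_le_mul_of_nonneg_right step6 hxx0
      _ = Cst * ((s:ℝ)/n) * rr^s := by
          rw [hCst]; field_simp
  -- sum bound
  have hbound : ∀ n : ℕ, 1 ≤ n →
      (∑ s ∈ Finset.Icc (K+1) (⌊δ * n⌋₊),
        (n.choose s : ℝ) * (((s^2).choose (s + s/K + 1)) : ℝ) * (c/n)^(s + s/K + 1))
      ≤ Cst * T / n := by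
    intro n hn
    have hnR : (0:ℝ) < n := by exact_mod_cast hn
    calc (∑ s ∈ Finset.Icc (K+1) (⌊δ * n⌋₊),
          (n.choose s : ℝ) * (((s^2).choose (s + s/K + 1)) : ℝ) * (c/n)^(s + s/K + 1))
        ≤ ∑ s ∈ Finset.Icc (K+1) (⌊δ * n⌋₊), Cst * ((s:ℝ)/n) * rr^s := by
          apply Finset.sum_le_sum
          intro s hs
          exact hterm n hn s hs
      _ = (Cst / n) * ∑ s ∈ Finset.Icc (K+1) (⌊δ * n⌋₊), (s:ℝ) * rr^s := by
          rw [Finset.mul_sum]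
          apply Finset.sum_congr rfl
          intro s _
          ring
      _ ≤ (Cst / n) * T := by
          apply mul_le_mul_of_nonneg_left _ (by positivity)
          apply Summable.sum_le_tsum _ (fun s _ => by positivity) hsum
      _ = Cst * T / n := by ring
  have hnonneg : ∀ n : ℕ, 0 ≤ (∑ s ∈ Finset.Icc (K+1) (⌊δ * n⌋₊),
      (n.choose s : ℝ) * (((s^2).choose (s + s/K + 1)) : ℝ) * (c/n)^(s + s/K + 1)) := by
    intro n
    apply Finset.sum_nonneg
    intro s _
    positivity
  apply tendsto_of_tendsto_of_tendsto_of_le_of_le' tendsto_const_nhds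
    (tendsto_const_div_atTop_nhds_zero_nat (Cst * T))
  · exact Eventually.of_forall hnonneg
  · filter_upwards [eventually_ge_atTop 1] with n hn
    exact hbound n hn
set_option linter.unusedSectionVars false

open SimpleGraph Finset

attribute [local instance] Classical.propDecidable

noncomputable section

variable {V : Type*} [Fintype V] [DecidableEq V] (G : SimpleGraph V)

/-- Reachability within a vertex finset. -/
def ReachIn (A : Finset V) (u v : V) : Prop :=
  ∃ p : G.Walk u v, ∀ x ∈ p.support, x ∈ A

/-- A finset is connected (in the induced sense). -/
def ConnF (A : Finset V) : Prop :=
  A.Nonempty ∧ ∀ u ∈ A, ∀ v ∈ A, ReachIn G A u v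

variable {G}

lemma ReachIn.mono {A B : Finset V} (h : A ⊆ B) {u v : V} (hr : ReachIn G A u v) :
    ReachIn G B u v := by
  obtain ⟨p, hp⟩ := hr
  exact ⟨p, fun x hx => h (hp x hx)⟩

lemma ReachIn.refl {A : Finset V} {u : V} (hu : u ∈ A) : ReachIn G A u u :=
  ⟨SimpleGraph.Walk.nil, fun x hx => by
    simp only [SimpleGraph.Walk.support_nil, List.mem_singleton] at hx; subst hx; exact hu⟩

lemma ReachIn.symm {A : Finset V} {u v : V} (h : ReachIn G A u v) : ReachIn G A v u := by
  obtain ⟨p, hp⟩ := h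
  exact ⟨p.reverse, fun x hx => hp x (by
    rw [SimpleGraph.Walk.support_reverse] at hx
    exact List.mem_reverse.1 hx)⟩

lemma ReachIn.trans {A : Finset V} {u v w : V} (h1 : ReachIn G A u v)
    (h2 : ReachIn G A v w) : ReachIn G A u w := by
  obtain ⟨p, hp⟩ := h1
  obtain ⟨q, hq⟩ := h2
  refine ⟨p.append q, fun x hx => ?_⟩
  rw [SimpleGraph.Walk.support_append] at hx
  rcases List.mem_append.1 hx with hx | hx
  · exact hp x hx
  · exact hq x (List.mem_of_mem_tail hx)

lemma ReachIn.left_mem {A : Finset V} {u v : V} (h : ReachIn G A u v) : u ∈ A := by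
  obtain ⟨p, hp⟩ := h
  exact hp u p.start_mem_support

lemma ReachIn.right_mem {A : Finset V} {u v : V} (h : ReachIn G A u v) : v ∈ A := by
  obtain ⟨p, hp⟩ := h
  exact hp v p.end_mem_support

/-- Gluing lemma: union of two overlapping connected sets is connected. -/
lemma ConnF.union {A B : Finset V} (hA : ConnF G A) (hB : ConnF G B)
    (hAB : (A ∩ B).Nonempty) : ConnF G (A ∪ B) := by
  obtain ⟨z, hz⟩ := hAB
  rw [Finset.mem_inter] at hz
  refine ⟨hA.1.mono Finset.subset_union_left, ?_⟩
  have hz1 := hz.1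
  have hz2 := hz.2
  have key : ∀ u ∈ A ∪ B, ReachIn G (A ∪ B) u z := by
    intro u hu
    rcases Finset.mem_union.1 hu with hu | hu
    · exact (hA.2 u hu z hz1).mono Finset.subset_union_left
    · exact (hB.2 u hu z hz2).mono Finset.subset_union_right
  intro u hu v hv
  exact (key u hu).trans (key v hv).symm

/-- Crossing lemma: a walk whose support satisfies a predicate at the start but not
at the end contains a crossing edge. -/
lemma walk_cross (P : V → Prop) : ∀ {a w : V} (p : G.Walk a w), P a → ¬ P w →
    ∃ x y, G.Adj x y ∧ x ∈ p.support ∧ y ∈ p.support ∧ P x ∧ ¬ P y := by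
  intro a w p
  induction p with
  | nil => intro h1 h2; exact absurd h1 h2
  | cons hadj q ih =>
      rename_i u x v
      intro h1 h2
      by_cases hx : P x
      · obtain ⟨x', y', h⟩ := ih hx h2
        exact ⟨x', y', h.1, by simp [SimpleGraph.Walk.support_cons, h.2.1],
          by simp [SimpleGraph.Walk.support_cons, h.2.2.1], h.2.2.2⟩
      · exact ⟨u, x, hadj, by simp [SimpleGraph.Walk.support_cons],
          by simp [SimpleGraph.Walk.support_cons], h1, hx⟩

/-- A BFS structure on a connected finset. -/
structure BFS (G : SimpleGraph V) (C : Finset V) where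
  root : V
  root_mem : root ∈ C
  par : V → V
  d : V → ℕ
  par_mem : ∀ v ∈ C, par v ∈ C
  par_adj : ∀ v ∈ C, v ≠ root → G.Adj v (par v)
  par_lt : ∀ v ∈ C, v ≠ root → d (par v) < d v
  par_root : par root = root
  d_root : d root = 0
  eq_root_of_d_eq_zero : ∀ v ∈ C, d v = 0 → v = root

lemma exists_bfs {C : Finset V} (hC : ConnF G C) : Nonempty (BFS G C) := by
  classical
  obtain ⟨r, hr⟩ := hC.1
  -- distance function
  have hne : ∀ v ∈ C, {k | ∃ p : G.Walk r v, (∀ x ∈ p.support, x ∈ C) ∧ p.length = k}.Nonempty := by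
    intro v hv
    obtain ⟨p, hp⟩ := hC.2 r hr v hv
    exact ⟨p.length, p, hp, rfl⟩
  set d : V → ℕ := fun v =>
    sInf {k | ∃ p : G.Walk r v, (∀ x ∈ p.support, x ∈ C) ∧ p.length = k} with hd
  have hdmem : ∀ v ∈ C, ∃ p : G.Walk r v, (∀ x ∈ p.support, x ∈ C) ∧ p.length = d v := by
    intro v hv
    exact Nat.sInf_mem (hne v hv)
  have hdle : ∀ v (p : G.Walk r v), (∀ x ∈ p.support, x ∈ C) → d v ≤ p.length := by
    intro v p hp
    exact Nat.sInf_le ⟨p, hp, rfl⟩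
  have hdroot : d r = 0 := by
    have := hdle r SimpleGraph.Walk.nil (by
      intro x hx
      simp only [SimpleGraph.Walk.support_nil, List.mem_singleton] at hx
      subst hx; exact hr)
    simpa using this
  have hd0 : ∀ v ∈ C, d v = 0 → v = r := by
    intro v hv h0
    obtain ⟨p, hp, hlen⟩ := hdmem v hv
    rw [h0] at hlen
    exact (SimpleGraph.Walk.eq_of_length_eq_zero hlen).symm
  have hpar : ∀ v, v ∈ C → v ≠ r → ∃ x, G.Adj v x ∧ x ∈ C ∧ d x < d v := by
    intro v hv hvr
    obtain ⟨p, hp, hlen⟩ := hdmem v hv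
    -- p : Walk r v with minimal length; decompose the reverse
    cases hrev : p.reverse with
    | nil =>
        exfalso
        have hl : p.length = 0 := by
          have := congrArg SimpleGraph.Walk.length hrev
          simpa [SimpleGraph.Walk.length_reverse] using this
        exact hvr (SimpleGraph.Walk.eq_of_length_eq_zero hl).symm
    | cons hadj q =>
        rename_i x
        refine ⟨x, hadj, ?_, ?_⟩
        · have hxs : x ∈ p.support := by
            have : x ∈ p.reverse.support := by
              rw [hrev, SimpleGraph.Walk.support_cons]
              exact List.mem_cons_of_mem _ q.start_mem_support
            rw [SimpleGraph.Walk.support_reverse] at this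
            exact List.mem_reverse.1 this
          exact hp x hxs
        · have hql : q.length + 1 = p.length := by
            have := congrArg SimpleGraph.Walk.length hrev
            rw [SimpleGraph.Walk.length_reverse] at this
            simp [SimpleGraph.Walk.length_cons] at this
            omega
          have hsupp : ∀ y ∈ q.reverse.support, y ∈ C := by
            intro y hy
            rw [SimpleGraph.Walk.support_reverse] at hy
            have hy2 : y ∈ q.support := List.mem_reverse.1 hy
            have : y ∈ p.reverse.support := by
              rw [hrev, SimpleGraph.Walk.support_cons]
              exact List.mem_cons_of_mem _ hy2
            rw [SimpleGraph.Walk.support_reverse] at this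
            exact hp y (List.mem_reverse.1 this)
          have := hdle x q.reverse hsupp
          rw [SimpleGraph.Walk.length_reverse] at this
          omega
  set par : V → V := fun v => if h : v ∈ C ∧ v ≠ r then (hpar v h.1 h.2).choose else r with hparx
  refine ⟨⟨r, hr, par, d, ?_, ?_, ?_, ?_, hdroot, hd0⟩⟩
  · intro v hv
    by_cases h : v ∈ C ∧ v ≠ r
    · have := (hpar v h.1 h.2).choose_spec
      simp only [hparx, dif_pos h]
      exact this.2.1
    · simp only [hparx, dif_neg h]
      exact hr
  · intro v hv hvr
    have h : v ∈ C ∧ v ≠ r := ⟨hv, hvr⟩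
    have := (hpar v h.1 h.2).choose_spec
    simp only [hparx, dif_pos h]
    exact this.1
  · intro v hv hvr
    have h : v ∈ C ∧ v ≠ r := ⟨hv, hvr⟩
    have := (hpar v h.1 h.2).choose_spec
    simp only [hparx, dif_pos h]
    exact this.2.2
  · simp only [hparx]
    rw [dif_neg]
    simp

variable {C : Finset V} (b : BFS G C)

/-- Descendants of `w` within `W`: elements whose parent chain to `w` stays in `W`. -/
def Dset (W : Finset V) (w : V) : Finset V :=
  W.filter (fun a => ∃ k : ℕ, b.par^[k] a = w ∧ ∀ j ≤ k, b.par^[j] a ∈ W)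

lemma mem_Dset {W : Finset V} {w a : V} :
    a ∈ Dset b W w ↔ a ∈ W ∧ ∃ k : ℕ, b.par^[k] a = w ∧ ∀ j ≤ k, b.par^[j] a ∈ W := by
  simp [Dset]

lemma Dset_subset (W : Finset V) (w : V) : Dset b W w ⊆ W :=
  Finset.filter_subset _ _

lemma mem_Dset_self {W : Finset V} {w : V} (hw : w ∈ W) : w ∈ Dset b W w := by
  refine Finset.mem_filter.2 ⟨hw, 0, rfl, ?_⟩
  intro j hj
  interval_cases j
  exact hw

lemma Dset_mono {W W' : Finset V} (h : W' ⊆ W) (w : V) : Dset b W' w ⊆ Dset b W w := by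
  intro a ha
  rw [mem_Dset] at ha ⊢
  obtain ⟨haW, k, hk, hchain⟩ := ha
  exact ⟨h haW, k, hk, fun j hj => h (hchain j hj)⟩

lemma iterate_par_root : ∀ k, b.par^[k] b.root = b.root := by
  intro k
  induction k with
  | zero => rfl
  | succ m ih => rw [Function.iterate_succ_apply, b.par_root, ih]

/-- Chain extension: if `a ∈ U` and `par a` is a `U`-descendant of `w`, so is `a`. -/
lemma mem_Dset_of_par {U : Finset V} {w a : V} (ha : a ∈ U)
    (hpar : b.par a ∈ Dset b U w) : a ∈ Dset b U w := by
  rw [mem_Dset] at hpar ⊢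
  obtain ⟨_, k, hk, hchain⟩ := hpar
  refine ⟨ha, k + 1, ?_, ?_⟩
  · rw [Function.iterate_succ_apply]; exact hk
  · intro j hj
    cases j with
    | zero => exact ha
    | succ i =>
        rw [Function.iterate_succ_apply]
        exact hchain i (by omega)

/-- Along a nontrivial descendant chain inside `C`, `d` strictly increases. -/
lemma d_lt_of_mem_Dset {W : Finset V} (hWC : W ⊆ C) :
    ∀ k (a : V), a ∈ W → (∀ j ≤ k, b.par^[j] a ∈ W) → ∀ {w}, b.par^[k] a = w → a ≠ w →
      b.d w < b.d a := by
  intro k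
  induction k with
  | zero => intro a _ _ w hk hne; exact absurd hk hne
  | succ m ih =>
      intro a ha hchain w hk hne
      by_cases har : a = b.root
      · exfalso
        apply hne
        rw [har] at hk ⊢
        rw [iterate_par_root] at hk
        exact hk
      · have hpa : b.par a ∈ W := by
          have := hchain 1 (by omega)
          simpa using this
        have hlt : b.d (b.par a) < b.d a := b.par_lt a (hWC ha) har
        have hk' : b.par^[m] (b.par a) = w := by
          rw [← Function.iterate_succ_apply]; exact hk
        by_cases hpw : b.par a = w
        · rw [← hpw]; exact hlt
        · have := ih (b.par a) hpa (fun j hj => by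
            rw [← Function.iterate_succ_apply]
            exact hchain (j+1) (by omega)) hk' hpw
          omega

lemma d_lt_of_mem_Dset' {W : Finset V} (hWC : W ⊆ C) {w a : V}
    (ha : a ∈ Dset b W w) (hne : a ≠ w) : b.d w < b.d a := by
  rw [mem_Dset] at ha
  obtain ⟨haW, k, hk, hchain⟩ := ha
  exact d_lt_of_mem_Dset b hWC k a haW hchain hk hne

/-- Everything in `C` is a descendant of the root. -/
lemma mem_Dset_root : ∀ a ∈ C, a ∈ Dset b C b.root := by
  have : ∀ k, ∀ a ∈ C, b.d a ≤ k → a ∈ Dset b C b.root := by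
    intro k
    induction k with
    | zero =>
        intro a ha hd
        have : a = b.root := b.eq_root_of_d_eq_zero a ha (by omega)
        subst this
        exact mem_Dset_self b ha
    | succ m ih =>
        intro a ha hd
        by_cases har : a = b.root
        · subst har; exact mem_Dset_self b ha
        · have h1 : b.d (b.par a) < b.d a := b.par_lt a ha har
          have h2 : b.par a ∈ C := b.par_mem a ha
          exact mem_Dset_of_par b ha (ih (b.par a) h2 (by omega))
  intro a ha
  exact this (b.d a) a ha le_rfl

/-- The abstract tree-cutting lemma. -/
theorem treecut (K : ℕ) : ∀ (W : Finset V), W ⊆ C →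
    ∃ R ⊆ W, (K+1) * R.card ≤ W.card ∧
      ∀ w ∈ W \ R, (Dset b (W \ R) w).card ≤ K := by
  intro W
  induction W using Finset.strongInduction with
  | _ W ih =>
    intro hWC
    by_cases hex : ∃ v ∈ W, K < (Dset b W v).card
    · -- pick a deepest heavy vertex
      obtain ⟨v, hv, hmax⟩ := Finset.exists_max_image (W.filter (fun v => K < (Dset b W v).card))
        b.d (by
          obtain ⟨v, hv1, hv2⟩ := hex
          exact ⟨v, Finset.mem_filter.2 ⟨hv1, hv2⟩⟩)
      rw [Finset.mem_filter] at hv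
      obtain ⟨hvW, hvheavy⟩ := hv
      set Dv := Dset b W v with hDv
      have hDvW : Dv ⊆ W := Dset_subset b W v
      have hvDv : v ∈ Dv := mem_Dset_self b hvW
      set W' := W \ Dv with hW'
      have hW'ss : W' ⊂ W := by
        rw [hW']
        refine Finset.sdiff_ssubset ?_ ?_
        · exact hDvW
        · exact ⟨v, hvDv⟩
      obtain ⟨R', hR'W', hR'card, hR'spec⟩ := ih W' hW'ss (Finset.Subset.trans (Finset.sdiff_subset) hWC)
      refine ⟨insert v R', ?_, ?_, ?_⟩
      · intro x hx
        rcases Finset.mem_insert.1 hx with rfl | hx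
        · exact hvW
        · exact (Finset.Subset.trans hR'W' Finset.sdiff_subset) hx
      · have h1 : (insert v R').card ≤ R'.card + 1 := Finset.card_insert_le v R'
        have h2 : W'.card = W.card - Dv.card := Finset.card_sdiff_of_subset hDvW
        have h3 : Dv.card ≤ W.card := Finset.card_le_card hDvW
        have h4 : K + 1 ≤ Dv.card := hvheavy
        calc (K+1) * (insert v R').card ≤ (K+1) * (R'.card + 1) := by
              apply Nat.mul_le_mul_left
              exact h1
          _ = (K+1) * R'.card + (K+1) := by ring
          _ ≤ W'.card + (K+1) := by omega
          _ ≤ W.card := by omega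
      · intro w hw
        rw [Finset.mem_sdiff] at hw
        obtain ⟨hwW, hwR⟩ := hw
        have hwv : w ≠ v := by
          intro h; exact hwR (h ▸ Finset.mem_insert_self v R')
        have hwR' : w ∉ R' := fun h => hwR (Finset.mem_insert_of_mem h)
        by_cases hwDv : w ∈ Dv
        · -- w is a strict descendant of v: it is light
          have hdw : b.d v < b.d w := d_lt_of_mem_Dset' b hWC hwDv hwv
          have hlight : (Dset b W w).card ≤ K := by
            by_contra hcon
            push_neg at hcon
            have : w ∈ W.filter (fun v => K < (Dset b W v).card) :=
              Finset.mem_filter.2 ⟨hwW, hcon⟩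
            have := hmax w this
            omega
          calc (Dset b (W \ insert v R') w).card ≤ (Dset b W w).card :=
                Finset.card_le_card (Dset_mono b (Finset.sdiff_subset) w)
            _ ≤ K := hlight
        · -- w survives into W'
          have hwW' : w ∈ W' := Finset.mem_sdiff.2 ⟨hwW, hwDv⟩
          have hsub : Dset b (W \ insert v R') w ⊆ Dset b (W' \ R') w := by
            intro a ha
            rw [mem_Dset] at ha
            obtain ⟨haWR, k, hk, hchain⟩ := ha
            -- every chain element avoids Dv
            have hnotDv : ∀ j ≤ k, b.par^[j] a ∉ Dv := by
              intro j hj hjDv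
              set x := b.par^[j] a with hx
              have hxWR : x ∈ W \ insert v R' := hchain j hj
              rw [Finset.mem_sdiff] at hxWR
              have hxv : x ≠ v := by
                intro h
                exact hxWR.2 (h ▸ Finset.mem_insert_self v R')
              -- x ∈ Dv : ∃ i, chain from x to v within W
              have hxDv := hjDv
              rw [hDv, mem_Dset] at hxDv
              obtain ⟨hxW, i, hi, hichain⟩ := hxDv
              by_cases hik : k - j < i
              · -- w is on the chain from x to v, hence w ∈ Dv
                apply hwDv
                rw [hDv, mem_Dset]
                have hw_eq : b.par^[k-j] x = w := by
                  rw [hx, ← Function.iterate_add_apply]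
                  have : k - j + j = k := by omega
                  rw [this, hk]
                refine ⟨hwW, i - (k - j), ?_, ?_⟩
                · rw [← hw_eq, ← Function.iterate_add_apply]
                  have : i - (k-j) + (k-j) = i := by omega
                  rw [this, hi]
                · intro l hl
                  rw [← hw_eq, ← Function.iterate_add_apply]
                  exact hichain (l + (k-j)) (by omega)
              · -- v is on the chain from a to w : contradiction with v ∈ R
                push_neg at hik
                have hv_on : b.par^[i + j] a = v := by
                  rw [Function.iterate_add_apply, ← hx, hi]
                have := hchain (i+j) (by omega)
                rw [hv_on] at this
                rw [Finset.mem_sdiff] at this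
                exact this.2 (Finset.mem_insert_self v R')
            rw [mem_Dset]
            have helem : ∀ j ≤ k, b.par^[j] a ∈ W' \ R' := by
              intro j hj
              have h1 := hchain j hj
              rw [Finset.mem_sdiff] at h1
              rw [Finset.mem_sdiff]
              constructor
              · rw [hW', Finset.mem_sdiff]
                exact ⟨h1.1, hnotDv j hj⟩
              · intro h
                exact h1.2 (Finset.mem_insert_of_mem h)
            refine ⟨helem 0 (by omega), k, hk, helem⟩
          calc (Dset b (W \ insert v R') w).card ≤ (Dset b (W' \ R') w).card :=
                Finset.card_le_card hsub
            _ ≤ K := hR'spec w (Finset.mem_sdiff.2 ⟨hwW', hwR'⟩)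
    · push_neg at hex
      refine ⟨∅, Finset.empty_subset _, by simp, ?_⟩
      intro w hw
      rw [Finset.sdiff_empty] at hw ⊢
      exact hex w hw
end

open SimpleGraph Finset

set_option linter.unusedSectionVars false
set_option maxHeartbeats 1000000

attribute [local instance] Classical.propDecidable

noncomputable section

variable {V : Type*} [Fintype V] [DecidableEq V] (G : SimpleGraph V)

/-- Number of edges of `G` inside the vertex set `A`. -/
def ecnt (A : Finset V) : ℕ :=
  ((Finset.univ : Finset (Sym2 V)).filter (fun e => e ∈ G.edgeSet ∧ ∀ x ∈ e, x ∈ A)).card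

variable {G}

lemma par_mem_Dset_of_ne {C : Finset V} (b : BFS G C) {U : Finset V} {w x : V}
    (hx : x ∈ Dset b U w) (hne : x ≠ w) : b.par x ∈ Dset b U w := by
  rw [mem_Dset] at hx ⊢
  obtain ⟨hxU, k, hk, hchain⟩ := hx
  cases k with
  | zero => exact absurd hk hne
  | succ m =>
      refine ⟨?_, m, ?_, ?_⟩
      · have := hchain 1 (by omega)
        simpa using this
      · rw [← Function.iterate_succ_apply]; exact hk
      · intro j hj
        rw [← Function.iterate_succ_apply]
        exact hchain (j+1) (by omega)

/-- Cutting a single sparse connected component. -/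
lemma compcut (K : ℕ) (hK : 1 ≤ K) (C : Finset V) (hconn : ConnF G C) (hKC : K < C.card)
    (hecnt : ecnt G C ≤ C.card + C.card / K) :
    ∃ RC ⊆ C, K * RC.card ≤ 5 * C.card ∧
      ∀ A ⊆ C \ RC, ConnF G A → A.card ≤ K := by
  classical
  obtain ⟨b⟩ := exists_bfs hconn
  set m := C.card with hm
  clear_value m
  have hm1 : 1 ≤ m := by omega
  -- tree edges
  set treeE : Finset (Sym2 V) := (C.erase b.root).image (fun v => s(v, b.par v)) with htreeE
  set EC : Finset (Sym2 V) :=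
    (Finset.univ : Finset (Sym2 V)).filter (fun e => e ∈ G.edgeSet ∧ ∀ x ∈ e, x ∈ C) with hEC
  have hinj : Set.InjOn (fun v => s(v, b.par v)) (C.erase b.root) := by
    intro v hv w hw h
    simp only [Finset.coe_erase, Set.mem_diff, Finset.mem_coe, Set.mem_singleton_iff] at hv hw
    rw [Sym2.eq_iff] at h
    rcases h with ⟨h1, _⟩ | ⟨h1, h2⟩
    · exact h1
    · exfalso
      have hd1 : b.d (b.par v) < b.d v := b.par_lt v hv.1 hv.2
      have hd2 : b.d (b.par w) < b.d w := b.par_lt w hw.1 hw.2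
      rw [← h1] at hd2
      rw [h2] at hd1
      omega
  have htcard : treeE.card = m - 1 := by
    rw [hm, htreeE, Finset.card_image_of_injOn hinj, Finset.card_erase_of_mem b.root_mem]
  have htsub : treeE ⊆ EC := by
    intro e he
    rw [htreeE, Finset.mem_image] at he
    obtain ⟨v, hv, rfl⟩ := he
    rw [Finset.mem_erase] at hv
    rw [hEC, Finset.mem_filter]
    refine ⟨Finset.mem_univ _, ?_, ?_⟩
    · exact G.mem_edgeSet.2 (b.par_adj v hv.2 hv.1)
    · intro x hx
      rw [Sym2.mem_iff] at hx
      rcases hx with rfl | rfl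
      · exact hv.2
      · exact b.par_mem v hv.2
  set NT : Finset (Sym2 V) := EC \ treeE with hNT
  have hNTcard : NT.card ≤ m / K + 1 := by
    obtain ⟨q, hq⟩ : ∃ q, m / K = q := ⟨_, rfl⟩
    rw [hq]
    have h1 : NT.card = EC.card - treeE.card := Finset.card_sdiff_of_subset htsub
    have h2 : ecnt G C = EC.card := rfl
    have h4 : EC.card ≤ m + q := by rw [← hq, ← h2]; exact hecnt
    omega
  set R1 : Finset V := C.filter (fun x => ∃ e ∈ NT, x ∈ e) with hR1
  have hR1C : R1 ⊆ C := Finset.filter_subset _ _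
  have hR1card : R1.card ≤ 2 * NT.card := by
    have hsub : R1 ⊆ NT.biUnion (fun e => Finset.univ.filter (· ∈ e)) := by
      intro x hx
      rw [hR1, Finset.mem_filter] at hx
      obtain ⟨_, e, he, hxe⟩ := hx
      rw [Finset.mem_biUnion]
      exact ⟨e, he, Finset.mem_filter.2 ⟨Finset.mem_univ _, hxe⟩⟩
    calc R1.card ≤ (NT.biUnion (fun e => Finset.univ.filter (· ∈ e))).card :=
          Finset.card_le_card hsub
      _ ≤ ∑ e ∈ NT, (Finset.univ.filter (· ∈ e)).card := Finset.card_biUnion_le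
      _ ≤ ∑ _e ∈ NT, 2 := by
          apply Finset.sum_le_sum
          intro e _
          induction e with
          | _ a c =>
            have : Finset.univ.filter (· ∈ s(a, c)) ⊆ {a, c} := by
              intro x hx
              rw [Finset.mem_filter, Sym2.mem_iff] at hx
              rcases hx.2 with rfl | rfl
              · exact Finset.mem_insert_self _ _
              · exact Finset.mem_insert_of_mem (Finset.mem_singleton_self _)
            calc (Finset.univ.filter (· ∈ s(a, c))).card ≤ ({a, c} : Finset V).card :=
                  Finset.card_le_card this
              _ ≤ 2 := (Finset.card_insert_le _ _).trans (by simp)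
      _ = 2 * NT.card := by rw [Finset.sum_const, smul_eq_mul, mul_comm]
  have hR1spec : ∀ x y, x ∈ C \ R1 → y ∈ C \ R1 → G.Adj x y → s(x, y) ∈ treeE := by
    intro x y hx hy hadj
    rw [Finset.mem_sdiff] at hx hy
    have heEC : s(x, y) ∈ EC := by
      rw [hEC, Finset.mem_filter]
      refine ⟨Finset.mem_univ _, G.mem_edgeSet.2 hadj, ?_⟩
      intro z hz
      rw [Sym2.mem_iff] at hz
      rcases hz with rfl | rfl
      · exact hx.1
      · exact hy.1
    by_contra hnot
    have : s(x, y) ∈ NT := Finset.mem_sdiff.2 ⟨heEC, hnot⟩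
    apply hx.2
    rw [hR1, Finset.mem_filter]
    exact ⟨hx.1, s(x, y), this, by rw [Sym2.mem_iff]; left; rfl⟩
  set W : Finset V := C \ R1 with hW
  obtain ⟨R2, hR2W, hR2card, hR2spec⟩ := treecut b K W (Finset.sdiff_subset)
  refine ⟨R1 ∪ R2, ?_, ?_, ?_⟩
  · exact Finset.union_subset hR1C (Finset.Subset.trans hR2W Finset.sdiff_subset)
  · -- cardinality bound
    have e0 : K * (R1 ∪ R2).card ≤ K * R1.card + K * R2.card := by
      have := Nat.mul_le_mul_left K (Finset.card_union_le R1 R2)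
      rw [Nat.left_distrib] at this
      exact this
    have e1 : K * R1.card ≤ 2 * (K * (m / K)) + 2 * K := by
      calc K * R1.card ≤ K * (2 * (m / K + 1)) := by
            apply Nat.mul_le_mul_left
            omega
        _ = 2 * (K * (m / K)) + 2 * K := by ring
    have e2 : K * (m / K) ≤ m := by
      rw [mul_comm]; exact Nat.div_mul_le_self m K
    have e3 : K * R2.card ≤ W.card := by
      calc K * R2.card ≤ (K+1) * R2.card := by
            apply Nat.mul_le_mul_right
            omega
        _ ≤ W.card := hR2card
    have e4 : W.card ≤ m := by
      rw [hW, hm]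
      exact Finset.card_le_card Finset.sdiff_subset
    omega
  · -- the component bound
    intro A hA hAconn
    have hAW : A ⊆ W \ R2 := by
      intro x hx
      have := hA hx
      rw [Finset.mem_sdiff, Finset.mem_union] at this
      rw [Finset.mem_sdiff, hW, Finset.mem_sdiff]
      push_neg at this
      exact ⟨⟨this.1, this.2.1⟩, this.2.2⟩
    obtain ⟨w, hwA, hwmin⟩ := Finset.exists_min_image A b.d hAconn.1
    have hAC : A ⊆ C := by
      intro x hx
      have h1 := (Finset.mem_sdiff.1 (hAW hx)).1
      rw [hW] at h1
      exact (Finset.mem_sdiff.1 h1).1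
    have hwWR : w ∈ W \ R2 := hAW hwA
    have key : ∀ k, ∀ a ∈ A, b.d a ≤ k → a ∈ Dset b (W \ R2) w := by
      intro k
      induction k with
      | zero =>
          intro a ha hd
          have haC := hAC ha
          have har : a = b.root := b.eq_root_of_d_eq_zero a haC (by omega)
          have hw0 : b.d w = 0 := by
            have := hwmin a ha
            omega
          have hwr : w = b.root := b.eq_root_of_d_eq_zero w (hAC hwA) hw0
          have haw : a = w := by rw [har, hwr]
          rw [haw]
          exact mem_Dset_self b hwWR
      | succ kk ih =>
          intro a ha hd
          by_cases haw : a = w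
          · rw [haw]
            exact mem_Dset_self b hwWR
          · have haC := hAC ha
            have har : a ≠ b.root := by
              intro h
              have hda0 : b.d a = 0 := by rw [h]; exact b.d_root
              have hw0 : b.d w = 0 := by
                have := hwmin a ha
                omega
              have hwr : w = b.root := b.eq_root_of_d_eq_zero w (hAC hwA) hw0
              exact haw (by rw [h, hwr])
            have hwnotD : ¬ (w ∈ Dset b C a) := by
              intro hmem
              have : b.d a < b.d w :=
                d_lt_of_mem_Dset' b (Finset.Subset.refl C) hmem (Ne.symm haw)
              have := hwmin a ha
              omega
            obtain ⟨p, hp⟩ := hAconn.2 a ha w hwA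
            obtain ⟨x, y, hxy, hxs, hys, hxD, hyD⟩ :=
              walk_cross (· ∈ Dset b C a) p (mem_Dset_self b haC) hwnotD
            have hxA : x ∈ A := hp x hxs
            have hyA : y ∈ A := hp y hys
            have hxCR1 : x ∈ C \ R1 := by
              have h1 := (Finset.mem_sdiff.1 (hAW hxA)).1
              rwa [hW] at h1
            have hyCR1 : y ∈ C \ R1 := by
              have h1 := (Finset.mem_sdiff.1 (hAW hyA)).1
              rwa [hW] at h1
            have htE := hR1spec x y hxCR1 hyCR1 hxy
            rw [htreeE, Finset.mem_image] at htE
            obtain ⟨v, hv, hveq⟩ := htE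
            rw [Finset.mem_erase] at hv
            rw [Sym2.eq_iff] at hveq
            have hpa : b.par a ∈ A := by
              rcases hveq with ⟨hvx, hvy⟩ | ⟨hvy, hvx⟩
              · -- v = x, par v = y
                subst hvx
                by_cases hxa : v = a
                · rw [← hxa, hvy]; exact hyA
                · exfalso
                  have := par_mem_Dset_of_ne b hxD hxa
                  rw [hvy] at this
                  exact hyD this
              · -- v = y, par v = x
                exfalso
                subst hvy
                apply hyD
                apply mem_Dset_of_par b (hAC hyA)
                rw [hvx]
                exact hxD
            have hda : b.d (b.par a) < b.d a := b.par_lt a haC har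
            have hstep := ih (b.par a) hpa (by omega)
            exact mem_Dset_of_par b (hAW ha) hstep
    have hsub : A ⊆ Dset b (W \ R2) w := fun a ha => key (b.d a) a ha le_rfl
    calc A.card ≤ (Dset b (W \ R2) w).card := Finset.card_le_card hsub
      _ ≤ K := hR2spec w hwWR
end

open SimpleGraph Finset

set_option linter.unusedSectionVars false
set_option maxHeartbeats 1000000

attribute [local instance] Classical.propDecidable

noncomputable section

variable {V : Type*} [Fintype V] [DecidableEq V] {G : SimpleGraph V}

theorem cut_main (K D : ℕ) (hK : 1 ≤ K)
    (hgood : ∀ A : Finset V, K < A.card → A.card ≤ D → ecnt G A ≤ A.card + A.card / K) :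
    ∀ S : Finset V, (∀ A ⊆ S, ConnF G A → A.card ≤ D) →
    ∃ R ⊆ S, K * R.card ≤ 7 * S.card ∧ ∀ A ⊆ S \ R, ConnF G A → A.card ≤ K := by
  intro S
  induction S using Finset.strongInduction with
  | _ S ih =>
    intro hS
    by_cases hex : ∃ A, A ⊆ S ∧ ConnF G A ∧ K < A.card
    · -- pick a maximal "big" connected subset C
      set T : Finset (Finset V) :=
        S.powerset.filter (fun A => ConnF G A ∧ K < A.card) with hT
      have hTne : T.Nonempty := by
        obtain ⟨A, h1, h2, h3⟩ := hex
        exact ⟨A, Finset.mem_filter.2 ⟨Finset.mem_powerset.2 h1, h2, h3⟩⟩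
      obtain ⟨C, hCT, hCmax⟩ := Finset.exists_max_image T Finset.card hTne
      rw [hT, Finset.mem_filter, Finset.mem_powerset] at hCT
      obtain ⟨hCS, hCconn, hKC⟩ := hCT
      -- absorption: connected subsets of S meeting C lie in C
      have habs : ∀ A ⊆ S, ConnF G A → (A ∩ C).Nonempty → A ⊆ C := by
        intro A hAS hAconn hmeet
        by_contra hnot
        rw [Finset.not_subset] at hnot
        obtain ⟨a, haA, haC⟩ := hnot
        have hUconn : ConnF G (A ∪ C) := hAconn.union hCconn hmeet
        have hUS : A ∪ C ⊆ S := Finset.union_subset hAS hCS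
        have hUT : A ∪ C ∈ T := by
          rw [hT, Finset.mem_filter, Finset.mem_powerset]
          refine ⟨hUS, hUconn, ?_⟩
          calc K < C.card := hKC
            _ ≤ (A ∪ C).card := Finset.card_le_card Finset.subset_union_right
        have hle := hCmax (A ∪ C) hUT
        have hlt : C.card < (A ∪ C).card := by
          apply Finset.card_lt_card
          constructor
          · exact Finset.subset_union_right
          · intro hsub
            exact haC (hsub (Finset.mem_union_left C haA))
        omega
      have hmD : C.card ≤ D := hS C hCS hCconn
      have hec : ecnt G C ≤ C.card + C.card / K := hgood C hKC hmD
      obtain ⟨RC, hRCC, hRCcard, hRCspec⟩ := compcut K hK C hCconn hKC hec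
      -- recurse on S \ C
      have hCne : C.Nonempty := hCconn.1
      have hSS : S \ C ⊂ S := by
        refine Finset.sdiff_ssubset hCS hCne
      obtain ⟨R', hR'S, hR'card, hR'spec⟩ := ih (S \ C) hSS
        (fun A hA hAconn => hS A (Finset.Subset.trans hA Finset.sdiff_subset) hAconn)
      refine ⟨RC ∪ R', ?_, ?_, ?_⟩
      · exact Finset.union_subset (Finset.Subset.trans hRCC hCS)
          (Finset.Subset.trans hR'S Finset.sdiff_subset)
      · have e0 : K * (RC ∪ R').card ≤ K * RC.card + K * R'.card := by
          have := Nat.mul_le_mul_left K (Finset.card_union_le RC R')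
          rw [Nat.left_distrib] at this
          exact this
        have e1 : (S \ C).card = S.card - C.card := Finset.card_sdiff_of_subset hCS
        have e2 : C.card ≤ S.card := Finset.card_le_card hCS
        omega
      · intro A hA hAconn
        by_cases hmeet : (A ∩ C).Nonempty
        · have hAS : A ⊆ S := Finset.Subset.trans hA Finset.sdiff_subset
          have hAC : A ⊆ C := habs A hAS hAconn hmeet
          have hACRC : A ⊆ C \ RC := by
            intro x hx
            rw [Finset.mem_sdiff]
            refine ⟨hAC hx, ?_⟩
            intro hxRC
            have := hA hx
            rw [Finset.mem_sdiff] at this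
            exact this.2 (Finset.mem_union_left R' hxRC)
          exact hRCspec A hACRC hAconn
        · have hAS2 : A ⊆ (S \ C) \ R' := by
            intro x hx
            have hxS := hA hx
            rw [Finset.mem_sdiff] at hxS
            rw [Finset.mem_sdiff, Finset.mem_sdiff]
            refine ⟨⟨hxS.1, ?_⟩, ?_⟩
            · intro hxC
              exact hmeet ⟨x, Finset.mem_inter.2 ⟨hx, hxC⟩⟩
            · intro hxR'
              exact hxS.2 (Finset.mem_union_right RC hxR')
          exact hR'spec A hAS2 hAconn
    · push_neg at hex
      refine ⟨∅, Finset.empty_subset _, by simp, ?_⟩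
      intro A hA hAconn
      rw [Finset.sdiff_empty] at hA
      exact hex A hA hAconn
end

open SimpleGraph Finset

set_option linter.unusedSectionVars false
set_option maxHeartbeats 1000000

attribute [local instance] Classical.propDecidable

noncomputable section

variable {V : Type*} [Fintype V] [DecidableEq V] {G : SimpleGraph V}

lemma NC_set_bddAbove (G : SimpleGraph V) (k : ℕ) :
    BddAbove {m | ∃ S : Set V, m = S.ncard ∧
      ∀ v : S, (((G.induce S).connectedComponentMk v).supp).ncard ≤ k} := by
  refine ⟨Fintype.card V, ?_⟩
  rintro m ⟨S, rfl, _⟩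
  calc S.ncard ≤ (Set.univ : Set V).ncard := Set.ncard_le_ncard (Set.subset_univ S) Set.finite_univ
    _ = Fintype.card V := by rw [Set.ncard_univ, Nat.card_eq_fintype_card]

lemma NC_set_nonempty (G : SimpleGraph V) (k : ℕ) :
    {m | ∃ S : Set V, m = S.ncard ∧
      ∀ v : S, (((G.induce S).connectedComponentMk v).supp).ncard ≤ k}.Nonempty := by
  refine ⟨0, ∅, by simp, ?_⟩
  rintro ⟨v, hv⟩
  exact absurd hv (Set.notMem_empty v)

lemma NC_mono (G : SimpleGraph V) {k k' : ℕ} (h : k ≤ k') : NC G k ≤ NC G k' := by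
  apply csSup_le (NC_set_nonempty G k)
  rintro m ⟨S, rfl, hcond⟩
  apply le_csSup (NC_set_bddAbove G k')
  exact ⟨S, rfl, fun v => le_trans (hcond v) h⟩

lemma NC_le_card (G : SimpleGraph V) (k : ℕ) : NC G k ≤ Fintype.card V := by
  apply csSup_le (NC_set_nonempty G k)
  rintro m ⟨S, rfl, _⟩
  calc S.ncard ≤ (Set.univ : Set V).ncard := Set.ncard_le_ncard (Set.subset_univ S) Set.finite_univ
    _ = Fintype.card V := by rw [Set.ncard_univ, Nat.card_eq_fintype_card]

lemma NC_attained (G : SimpleGraph V) (k : ℕ) :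
    ∃ S : Set V, NC G k = S.ncard ∧
      ∀ v : S, (((G.induce S).connectedComponentMk v).supp).ncard ≤ k :=
  Nat.sSup_mem (NC_set_nonempty G k) (NC_set_bddAbove G k)

/-- Transfer a walk with support in `A ⊆ S` into the induced graph on `S`. -/
lemma reachable_induce_of_walk {S : Set V} :
    ∀ {u v : V} (p : G.Walk u v), (∀ x ∈ p.support, x ∈ S) →
    ∀ (hu : u ∈ S) (hv : v ∈ S), (G.induce S).Reachable ⟨u, hu⟩ ⟨v, hv⟩ := by
  intro u v p
  induction p with
  | nil => intro _ hu hv; rfl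
  | cons hadj q ihq =>
      rename_i a x c
      intro hsupp hu hv
      have hx : x ∈ S := hsupp x (by
        rw [SimpleGraph.Walk.support_cons]
        exact List.mem_cons_of_mem _ q.start_mem_support)
      have h1 : (G.induce S).Adj ⟨a, hu⟩ ⟨x, hx⟩ := hadj
      have h2 := ihq (fun z hz => hsupp z (by
        rw [SimpleGraph.Walk.support_cons]
        exact List.mem_cons_of_mem _ hz)) hx hv
      exact h1.reachable.trans h2

/-- Transfer a walk in the induced graph down to `G`. -/
lemma walk_of_induce_walk {S : Set V} :
    ∀ {u v : ↥S} (p : (G.induce S).Walk u v),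
      ∃ q : G.Walk u.1 v.1, ∀ z ∈ q.support, ∃ z' : ↥S, z' ∈ p.support ∧ z'.1 = z := by
  intro u v p
  induction p with
  | nil =>
      refine ⟨SimpleGraph.Walk.nil, ?_⟩
      intro z hz
      simp only [SimpleGraph.Walk.support_nil, List.mem_singleton] at hz
      subst hz
      exact ⟨_, by simp [SimpleGraph.Walk.support_nil], rfl⟩
  | cons hadj q ihq =>
      rename_i a x c
      obtain ⟨q', hq'⟩ := ihq
      have hadj' : G.Adj a.1 x.1 := by
        simpa [SimpleGraph.comap_adj] using hadj
      refine ⟨SimpleGraph.Walk.cons hadj' q', ?_⟩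
      intro z hz
      rw [SimpleGraph.Walk.support_cons] at hz
      rcases List.mem_cons.1 hz with rfl | hz
      · exact ⟨a, by simp [SimpleGraph.Walk.support_cons], rfl⟩
      · obtain ⟨z', hz1, hz2⟩ := hq' z hz
        exact ⟨z', by rw [SimpleGraph.Walk.support_cons]; exact List.mem_cons_of_mem _ hz1, hz2⟩

/-- The component-size hypothesis transfers to connected finsets. -/
lemma connF_card_le {S : Set V} {Dn : ℕ}
    (hcomp : ∀ v : S, (((G.induce S).connectedComponentMk v).supp).ncard ≤ Dn)
    (A : Finset V) (hAS : ↑A ⊆ S) (hconn : ConnF G A) : A.card ≤ Dn := by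
  obtain ⟨v₀, hv₀⟩ := hconn.1
  have hv₀S : v₀ ∈ S := hAS hv₀
  set c := (G.induce S).connectedComponentMk ⟨v₀, hv₀S⟩ with hc
  have hmem : ∀ a ∈ A, ∀ (haS : a ∈ S), (⟨a, haS⟩ : ↥S) ∈ c.supp := by
    intro a ha haS
    obtain ⟨p, hp⟩ := hconn.2 a ha v₀ hv₀
    have hreach := reachable_induce_of_walk p (fun x hx => hAS (hp x hx)) haS hv₀S
    rw [SimpleGraph.ConnectedComponent.mem_supp_iff, hc]
    exact SimpleGraph.ConnectedComponent.sound hreach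
  have hsub : (↑A : Set V) ⊆ Subtype.val '' c.supp := by
    intro a ha
    have haA : a ∈ A := ha
    exact ⟨⟨a, hAS ha⟩, hmem a haA (hAS ha), rfl⟩
  calc A.card = (↑A : Set V).ncard := (Set.ncard_coe_finset A).symm
    _ ≤ (Subtype.val '' c.supp).ncard :=
        Set.ncard_le_ncard hsub ((c.supp.toFinite).image _)
    _ = c.supp.ncard := Set.ncard_image_of_injective _ Subtype.val_injective
    _ ≤ Dn := hcomp ⟨v₀, hv₀S⟩

/-- Conversely, small connected finsets give small components. -/
lemma comp_le_of_connF {S' : Finset V} {K : ℕ}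
    (hsmall : ∀ A ⊆ S', ConnF G A → A.card ≤ K) :
    ∀ v : (↑S' : Set V),
      (((G.induce (↑S' : Set V)).connectedComponentMk v).supp).ncard ≤ K := by
  intro v
  set SS := ((G.induce (↑S' : Set V)).connectedComponentMk v).supp with hSS
  set A : Finset V := (Subtype.val '' SS).toFinset with hA
  have hAS' : A ⊆ S' := by
    intro x hx
    rw [hA, Set.mem_toFinset] at hx
    obtain ⟨x', _, rfl⟩ := hx
    exact x'.2
  have hvSS : v ∈ SS := by
    rw [hSS, SimpleGraph.ConnectedComponent.mem_supp_iff]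
  have hAconn : ConnF G A := by
    constructor
    · exact ⟨v.1, by rw [hA, Set.mem_toFinset]; exact ⟨v, hvSS, rfl⟩⟩
    · intro x hx y hy
      rw [hA, Set.mem_toFinset] at hx hy
      obtain ⟨x', hx', rfl⟩ := hx
      obtain ⟨y', hy', rfl⟩ := hy
      have hxc : (G.induce (↑S' : Set V)).connectedComponentMk x'
          = (G.induce (↑S' : Set V)).connectedComponentMk y' := by
        rw [SimpleGraph.ConnectedComponent.mem_supp_iff] at hx' hy'
        rw [hx', hy']
      have hreach := SimpleGraph.ConnectedComponent.exact hxc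
      obtain ⟨p⟩ := hreach
      obtain ⟨q, hq⟩ := walk_of_induce_walk p
      refine ⟨q, ?_⟩
      intro z hz
      obtain ⟨z', hz1, hz2⟩ := hq z hz
      -- z' is on the walk p, hence in the same component, hence in SS
      have hzreach : (G.induce (↑S' : Set V)).Reachable x' z' :=
        ⟨p.takeUntil z' hz1⟩
      have hzc : z' ∈ SS := by
        rw [hSS, SimpleGraph.ConnectedComponent.mem_supp_iff]
        have := SimpleGraph.ConnectedComponent.sound hzreach.symm
        rw [SimpleGraph.ConnectedComponent.mem_supp_iff] at hx'
        rw [this, hx']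
      rw [hA, Set.mem_toFinset]
      exact ⟨z', hzc, hz2⟩
  have hcard : A.card ≤ K := hsmall A hAS' hAconn
  have : SS.ncard = A.card := by
    rw [hA, ← Set.ncard_eq_toFinset_card',
      Set.ncard_image_of_injective _ Subtype.val_injective]
  omega

/-- Main bridge: under the sparsity hypothesis, `NC G D` exceeds `NC G K` by at most
`7 * card V / K`. -/
theorem NC_cut (G : SimpleGraph V) (K D : ℕ) (hK : 1 ≤ K)
    (hgood : ∀ A : Finset V, K < A.card → A.card ≤ D → ecnt G A ≤ A.card + A.card / K) :
    ∃ r : ℕ, NC G D ≤ NC G K + r ∧ K * r ≤ 7 * Fintype.card V := by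
  obtain ⟨S, hSval, hScomp⟩ := NC_attained G D
  set SF : Finset V := S.toFinset with hSF
  have hSFcoe : (↑SF : Set V) = S := by rw [hSF]; exact Set.coe_toFinset S
  have hSFcard : SF.card = S.ncard := by
    rw [hSF, ← Set.ncard_eq_toFinset_card']
  have hS : ∀ A ⊆ SF, ConnF G A → A.card ≤ D := by
    intro A hA hconn
    apply connF_card_le hScomp A _ hconn
    rw [← hSFcoe]
    exact_mod_cast hA
  obtain ⟨R, hRS, hRcard, hRspec⟩ := cut_main K D hK hgood SF hS
  set S' : Finset V := SF \ R with hS'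
  have hspec' : ∀ A ⊆ S', ConnF G A → A.card ≤ K := hRspec
  have hcomp' := comp_le_of_connF hspec'
  have hmem : S'.card ∈ {m | ∃ T : Set V, m = T.ncard ∧
      ∀ v : T, (((G.induce T).connectedComponentMk v).supp).ncard ≤ K} := by
    refine ⟨(↑S' : Set V), ?_, hcomp'⟩
    rw [Set.ncard_coe_finset]
  have hNCK : S'.card ≤ NC G K := le_csSup (NC_set_bddAbove G K) hmem
  refine ⟨R.card, ?_, ?_⟩
  · have h1 : S'.card = SF.card - R.card := Finset.card_sdiff_of_subset hRS
    have h2 : R.card ≤ SF.card := Finset.card_le_card hRS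
    have h3 : NC G D = SF.card := by rw [hSFcard, hSval]
    omega
  · calc K * R.card ≤ 7 * SF.card := hRcard
      _ ≤ 7 * Fintype.card V := by
        apply Nat.mul_le_mul_left
        exact Finset.card_le_card (Finset.subset_univ SF)
end

open SimpleGraph Filter Finset

set_option linter.unusedSectionVars false
set_option maxHeartbeats 2000000

attribute [local instance] Classical.propDecidable

noncomputable section

lemma erProb_eq_pr (n : ℕ) (p : ℝ) (A : Set (SimpleGraph (Fin n))) :
    erProb n p A = pr n p A := erProbDef n p A

/-- Threshold edge count. -/
def tK (K s : ℕ) : ℕ := s + s / K + 1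

/-- Slots inside a vertex set. -/
def slotsIn (n : ℕ) (A : Finset (Fin n)) : Finset (ESlot n) :=
  Finset.univ.filter (fun e => ∀ x ∈ e.1, x ∈ A)

/-- The bad event: some middling vertex set spans too many edges. -/
def Badev (δ : ℝ) (K n : ℕ) : Set (SimpleGraph (Fin n)) :=
  ⋃ s ∈ Finset.Icc (K+1) (⌊δ * n⌋₊),
    ⋃ A ∈ Finset.powersetCard s (Finset.univ : Finset (Fin n)),
      ⋃ F ∈ Finset.powersetCard (tK K s) (slotsIn n A), {G | F ⊆ slots n G}

lemma ecnt_eq_slotcount {n : ℕ} (G : SimpleGraph (Fin n)) (A : Finset (Fin n)) :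
    ecnt G A = ((Finset.univ : Finset (ESlot n)).filter
      (fun e => e.1 ∈ G.edgeSet ∧ ∀ x ∈ e.1, x ∈ A)).card := by
  unfold ecnt
  rw [← Finset.card_image_of_injective
    ((Finset.univ : Finset (ESlot n)).filter (fun e => e.1 ∈ G.edgeSet ∧ ∀ x ∈ e.1, x ∈ A))
    (Subtype.val_injective)]
  congr 1
  ext e
  simp only [Finset.mem_image, Finset.mem_filter, Finset.mem_univ, true_and]
  constructor
  · rintro ⟨he, hA⟩
    exact ⟨⟨e, G.not_isDiag_of_mem_edgeSet he⟩, ⟨he, hA⟩, rfl⟩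
  · rintro ⟨e', ⟨he, hA⟩, rfl⟩
    exact ⟨he, hA⟩

lemma slotsIn_card_le {n : ℕ} (A : Finset (Fin n)) : (slotsIn n A).card ≤ A.card ^ 2 := by
  have hsub : (slotsIn n A).image Subtype.val ⊆ A.sym2 := by
    intro e he
    rw [Finset.mem_image] at he
    obtain ⟨e', he', rfl⟩ := he
    rw [slotsIn, Finset.mem_filter] at he'
    rw [Finset.mem_sym2_iff]
    exact he'.2
  have h1 : (slotsIn n A).card ≤ A.sym2.card := by
    rw [← Finset.card_image_of_injective (slotsIn n A) Subtype.val_injective]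
    exact Finset.card_le_card hsub
  have h2 : A.sym2.card ≤ A.card ^ 2 := by
    rw [Finset.card_sym2]
    rcases Nat.eq_zero_or_pos A.card with h | h
    · rw [h]; simp
    · have h3 : (A.card + 1).choose 2 = (A.card + 1) * A.card / 2 := by
        rw [Nat.choose_two_right]
        simp
      rw [h3]
      have h4 : (A.card + 1) * A.card ≤ 2 * (A.card ^ 2) := by nlinarith
      calc (A.card + 1) * A.card / 2 ≤ 2 * (A.card ^ 2) / 2 := Nat.div_le_div_right h4
        _ = A.card ^ 2 := by omega
  omega

section bound
variable {n : ℕ} {p : ℝ} (hp0 : 0 ≤ p) (hp1 : p ≤ 1)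

include hp0 hp1 in
/-- Union bound on the bad event. -/
lemma pr_Badev_le (δ : ℝ) (K : ℕ) :
    pr n p (Badev δ K n) ≤ ∑ s ∈ Finset.Icc (K+1) (⌊δ * n⌋₊),
      (n.choose s : ℝ) * (((s^2).choose (tK K s)) : ℝ) * p ^ (tK K s) := by
  calc pr n p (Badev δ K n)
      ≤ ∑ s ∈ Finset.Icc (K+1) (⌊δ * n⌋₊),
          pr n p (⋃ A ∈ Finset.powersetCard s (Finset.univ : Finset (Fin n)),
            ⋃ F ∈ Finset.powersetCard (tK K s) (slotsIn n A), {G | F ⊆ slots n G}) :=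
        pr_biUnion_le hp0 hp1 _ _
    _ ≤ ∑ s ∈ Finset.Icc (K+1) (⌊δ * n⌋₊),
          (n.choose s : ℝ) * (((s^2).choose (tK K s)) : ℝ) * p ^ (tK K s) := by
        apply Finset.sum_le_sum
        intro s _
        calc pr n p (⋃ A ∈ Finset.powersetCard s (Finset.univ : Finset (Fin n)),
              ⋃ F ∈ Finset.powersetCard (tK K s) (slotsIn n A), {G | F ⊆ slots n G})
            ≤ ∑ A ∈ Finset.powersetCard s (Finset.univ : Finset (Fin n)),
                pr n p (⋃ F ∈ Finset.powersetCard (tK K s) (slotsIn n A),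
                  {G | F ⊆ slots n G}) := pr_biUnion_le hp0 hp1 _ _
          _ ≤ ∑ A ∈ Finset.powersetCard s (Finset.univ : Finset (Fin n)),
                (((s^2).choose (tK K s)) : ℝ) * p ^ (tK K s) := by
              apply Finset.sum_le_sum
              intro A hA
              have hAcard : A.card = s := (Finset.mem_powersetCard.1 hA).2
              calc pr n p (⋃ F ∈ Finset.powersetCard (tK K s) (slotsIn n A),
                    {G | F ⊆ slots n G})
                  ≤ ∑ F ∈ Finset.powersetCard (tK K s) (slotsIn n A),
                      pr n p {G | F ⊆ slots n G} := pr_biUnion_le hp0 hp1 _ _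
                _ = ∑ F ∈ Finset.powersetCard (tK K s) (slotsIn n A), p ^ (tK K s) := by
                    apply Finset.sum_congr rfl
                    intro F hF
                    rw [pr_edges_present, (Finset.mem_powersetCard.1 hF).2]
                _ = ((slotsIn n A).card.choose (tK K s) : ℝ) * p ^ (tK K s) := by
                    rw [Finset.sum_const, Finset.card_powersetCard, nsmul_eq_mul]
                _ ≤ (((s^2).choose (tK K s)) : ℝ) * p ^ (tK K s) := by
                    apply mul_le_mul_of_nonneg_right _ (by positivity)
                    have h1 : (slotsIn n A).card ≤ s^2 := by
                      have := slotsIn_card_le A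
                      rwa [hAcard] at this
                    exact_mod_cast Nat.choose_le_choose (tK K s) h1
          _ = (n.choose s : ℝ) * (((s^2).choose (tK K s)) : ℝ) * p ^ (tK K s) := by
              rw [Finset.sum_const, Finset.card_powersetCard, Finset.card_univ,
                Fintype.card_fin, nsmul_eq_mul]
              ring
end bound

/-- If `G` avoids the bad event, all middling sets are sparse. -/
lemma good_of_not_bad {n : ℕ} {δ : ℝ} {K : ℕ} {G : SimpleGraph (Fin n)}
    (hG : G ∉ Badev δ K n) :
    ∀ A : Finset (Fin n), K < A.card → A.card ≤ ⌊δ * n⌋₊ →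
      ecnt G A ≤ A.card + A.card / K := by
  intro A hKA hAD
  by_contra hcon
  push_neg at hcon
  have hcon' : tK K A.card ≤ ecnt G A := hcon
  rw [ecnt_eq_slotcount] at hcon'
  have hsub0 : ((Finset.univ : Finset (ESlot n)).filter
      (fun e => e.1 ∈ G.edgeSet ∧ ∀ x ∈ e.1, x ∈ A)) ⊆ slotsIn n A := by
    intro e he
    rw [Finset.mem_filter] at he
    rw [slotsIn, Finset.mem_filter]
    exact ⟨he.1, he.2.2⟩
  obtain ⟨F, hFsub, hFcard⟩ := Finset.exists_subset_card_eq hcon'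
  apply hG
  rw [Badev, Set.mem_iUnion₂]
  refine ⟨A.card, Finset.mem_Icc.2 ⟨hKA, hAD⟩, ?_⟩
  rw [Set.mem_iUnion₂]
  refine ⟨A, Finset.mem_powersetCard.2 ⟨Finset.subset_univ A, rfl⟩, ?_⟩
  rw [Set.mem_iUnion₂]
  refine ⟨F, Finset.mem_powersetCard.2 ⟨Finset.Subset.trans hFsub hsub0, hFcard⟩, ?_⟩
  intro e he
  have := hFsub he
  rw [Finset.mem_filter] at this
  exact mem_slots.2 this.2.1

/-- If `G` avoids the bad event, the dismantling inequality holds. -/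
lemma event_of_not_bad {n : ℕ} (hn : 1 ≤ n) {δ ε : ℝ} {K : ℕ} (hK : 1 ≤ K)
    (hKδ : K ≤ ⌊1/δ⌋₊) (hKε : (7:ℝ) ≤ ε * K) (hε : 0 < ε)
    {G : SimpleGraph (Fin n)} (hG : G ∉ Badev δ K n) :
    (NC G ⌊δ * n⌋₊ : ℝ) / n ≤ (NC G ⌊1 / δ⌋₊ : ℝ) / n + ε := by
  have hgood := good_of_not_bad hG
  obtain ⟨r, hr1, hr2⟩ := NC_cut G K (⌊δ * n⌋₊) hK hgood
  rw [Fintype.card_fin] at hr2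
  have hmono : NC G K ≤ NC G ⌊1/δ⌋₊ := NC_mono G hKδ
  have hnR : (0:ℝ) < n := by exact_mod_cast hn
  have hKR : (0:ℝ) < K := by exact_mod_cast hK
  have h1 : (NC G ⌊δ * n⌋₊ : ℝ) ≤ (NC G ⌊1/δ⌋₊ : ℝ) + r := by
    have : NC G ⌊δ * n⌋₊ ≤ NC G ⌊1/δ⌋₊ + r := by omega
    exact_mod_cast this
  have h2 : (K:ℝ) * r ≤ 7 * n := by exact_mod_cast hr2
  have h3 : (r:ℝ) ≤ ε * n := by
    have h4 : 7 * (n:ℝ) ≤ ε * K * n := by nlinarith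
    nlinarith
  calc (NC G ⌊δ * n⌋₊ : ℝ) / n ≤ ((NC G ⌊1/δ⌋₊ : ℝ) + ε * n) / n :=
        (div_le_div_iff_of_pos_right hnR).mpr (by linarith)
    _ = (NC G ⌊1 / δ⌋₊ : ℝ) / n + ε := by
        field_simp

/-- For every `c > 1` and `ε > 0` there exists `δ > 0` such that whp the
random graph `G ∈ 𝒢(n, c/n)` satisfies `ν(G, 𝒞_{⌊δn⌋}) ≤ ν(G, 𝒞_{⌊1/δ⌋}) + ε`,
where `ν(G, 𝒞_k) = N(G, 𝒞_k)/n`. -/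
theorem er_dismantle (c ε : ℝ) (hc : 1 < c) (hε : 0 < ε) :
    ∃ δ > (0 : ℝ), Tendsto (fun n : ℕ =>
      erProb n (c / n) {G | (NC G ⌊δ * n⌋₊ : ℝ) / n ≤ (NC G ⌊1 / δ⌋₊ : ℝ) / n + ε})
      atTop (nhds 1) := by
  have hc0 : (0:ℝ) < c := by linarith
  set K : ℕ := max 1 ⌈7/ε⌉₊ with hKdef
  have hK1 : 1 ≤ K := le_max_left _ _
  have hKR : (0:ℝ) < K := by exact_mod_cast hK1
  have hKε : (7:ℝ) ≤ ε * K := by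
    have h1 : (7:ℝ)/ε ≤ (⌈7/ε⌉₊ : ℝ) := Nat.le_ceil _
    have h2 : ((⌈7/ε⌉₊ : ℕ) : ℝ) ≤ (K : ℝ) := by
      exact_mod_cast le_max_right 1 ⌈7/ε⌉₊
    have h3 : (7:ℝ)/ε ≤ K := le_trans h1 h2
    rw [div_le_iff₀ hε] at h3
    linarith
  set δ : ℝ := min (1/(K:ℝ)) (((9*c)^K * (6*c))⁻¹) with hδdef
  have hδ0 : 0 < δ := lt_min (by positivity) (by positivity)
  refine ⟨δ, hδ0, ?_⟩
  have hδhalf : (9*c)^K * (3*δ*c) ≤ 1/2 := by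
    have h1 : δ ≤ ((9*c)^K * (6*c))⁻¹ := min_le_right _ _
    have h2 : (0:ℝ) < (9*c)^K := by positivity
    have h3 : (9*c)^K * (3*(((9*c)^K * (6*c))⁻¹)*c) = 1/2 := by
      field_simp
      ring
    calc (9*c)^K * (3*δ*c) ≤ (9*c)^K * (3*(((9*c)^K * (6*c))⁻¹)*c) := by
          apply mul_le_mul_of_nonneg_left _ (le_of_lt h2)
          have : (0:ℝ) < c := hc0
          nlinarith
      _ = 1/2 := h3
  have hKδ : K ≤ ⌊1/δ⌋₊ := by
    apply Nat.le_floor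
    have h1 : δ ≤ 1/(K:ℝ) := min_le_left _ _
    rw [le_div_iff₀ hδ0]
    calc (K:ℝ) * δ ≤ (K:ℝ) * (1/(K:ℝ)) := by
          apply mul_le_mul_of_nonneg_left h1 (le_of_lt hKR)
      _ = 1 := by field_simp
  have hB := bad_sum_tendsto_zero c hc K hK1 δ hδ0 hδhalf
  -- squeeze
  have hlow : Tendsto (fun n : ℕ => 1 - ∑ s ∈ Finset.Icc (K+1) (⌊δ * n⌋₊),
      (n.choose s : ℝ) * (((s^2).choose (s + s/K + 1)) : ℝ) * (c/n)^(s + s/K + 1))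
      atTop (nhds 1) := by
    have := hB.const_sub 1
    simpa using this
  apply tendsto_of_tendsto_of_tendsto_of_le_of_le' hlow tendsto_const_nhds
  · -- eventual lower bound
    filter_upwards [eventually_ge_atTop (max 1 ⌈c⌉₊)] with n hn
    have hn1 : 1 ≤ n := le_trans (le_max_left _ _) hn
    have hnc : c ≤ n := by
      calc c ≤ (⌈c⌉₊ : ℝ) := Nat.le_ceil c
        _ ≤ n := by exact_mod_cast le_trans (le_max_right _ _) hn
    have hnR : (0:ℝ) < n := by exact_mod_cast hn1
    have hp0 : 0 ≤ c/n := by positivity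
    have hp1 : c/n ≤ 1 := by
      rw [div_le_one hnR]
      exact hnc
    rw [erProb_eq_pr]
    set E : Set (SimpleGraph (Fin n)) :=
      {G | (NC G ⌊δ * n⌋₊ : ℝ) / n ≤ (NC G ⌊1 / δ⌋₊ : ℝ) / n + ε} with hE
    have hsub : (Badev δ K n)ᶜ ⊆ E := by
      intro G hG
      rw [Set.mem_compl_iff] at hG
      exact event_of_not_bad hn1 hK1 hKδ hKε hε hG
    calc 1 - ∑ s ∈ Finset.Icc (K+1) (⌊δ * n⌋₊),
          (n.choose s : ℝ) * (((s^2).choose (s + s/K + 1)) : ℝ) * (c/n)^(s + s/K + 1)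
        ≤ 1 - pr n (c/n) (Badev δ K n) := by
          have h := pr_Badev_le hp0 hp1 (n := n) δ K
          have heq : ∀ s : ℕ, tK K s = s + s/K + 1 := fun s => rfl
          simp only [heq] at h
          linarith
      _ = pr n (c/n) (Badev δ K n)ᶜ := by
          have := pr_add_compl (n := n) (p := c/n) (Badev δ K n)
          linarith
      _ ≤ pr n (c/n) E := pr_mono hp0 hp1 hsub
  · -- eventual upper bound
    filter_upwards [eventually_ge_atTop (max 1 ⌈c⌉₊)] with n hn
    have hn1 : 1 ≤ n := le_trans (le_max_left _ _) hn
    have hnc : c ≤ n := by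
      calc c ≤ (⌈c⌉₊ : ℝ) := Nat.le_ceil c
        _ ≤ n := by exact_mod_cast le_trans (le_max_right _ _) hn
    have hnR : (0:ℝ) < n := by exact_mod_cast hn1
    have hp0 : 0 ≤ c/n := by positivity
    have hp1 : c/n ≤ 1 := by
      rw [div_le_one hnR]
      exact hnc
    rw [erProb_eq_pr]
    exact pr_le_one hp0 hp1 _
end
end

section
/- Let $c > 0$ and $\epsilon > 0$. There exists $\delta > 0$ such that for all sufficiently large $n$ and every integer $t$ with $1 \le t \le \delta n$, the probability that the Erdős–Rényi random graph $G \in \mathcal{G}(n, c/n)$ contains a vertex set $T$ with $|T| = t$ spanning at least $(1+\epsilon/4)t$ edges is at most $\exp\{-\epsilon t \log(n/t) / 8\}$. -/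
set_option maxHeartbeats 1000000

open SimpleGraph Filter Finset
open scoped Classical

lemma sum_subset_weight {α : Type*} [Fintype α] [DecidableEq α] (S : Finset α) (p q : ℝ) :
    ∑ F : Finset α, (if S ⊆ F then p ^ F.card * q ^ (Fintype.card α - F.card) else 0)
      = p ^ S.card * (p + q) ^ (Fintype.card α - S.card) := by
  rw [← Finset.sum_filter]
  have h1 : ∀ F' ∈ Sᶜ.powerset, p ^ (S ∪ F').card * q ^ (Fintype.card α - (S ∪ F').card)
      = p ^ S.card * (p ^ F'.card * q ^ (Sᶜ.card - F'.card)) := by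
    intro F' hF'
    rw [Finset.mem_powerset] at hF'
    have hd : Disjoint S F' := by
      refine Finset.disjoint_left.mpr fun a ha ha' => ?_
      exact (Finset.mem_compl.mp (hF' ha')) ha
    have hcard : (S ∪ F').card = S.card + F'.card := Finset.card_union_of_disjoint hd
    have hle : F'.card ≤ Sᶜ.card := Finset.card_le_card hF'
    have hcc : Sᶜ.card = Fintype.card α - S.card := Finset.card_compl S
    have hSle : S.card ≤ Fintype.card α := Finset.card_le_univ S
    rw [hcard, pow_add, Finset.card_compl]
    ring_nf
    congr 2
    omega
  rw [Finset.sum_nbij' (i := fun F => F \ S) (j := fun F' => S ∪ F') (t := Sᶜ.powerset)]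
  · rw [Finset.sum_congr rfl h1, ← Finset.mul_sum]
    congr 1
    rw [← Finset.card_compl S]
    have := Finset.prod_add (fun _ => p) (fun _ => q) Sᶜ
    simp only [Finset.prod_const] at this
    rw [this]
    refine Finset.sum_congr rfl fun t ht => ?_
    rw [Finset.card_sdiff_of_subset (Finset.mem_powerset.mp ht)]
  · intro F hF
    refine Finset.mem_powerset.mpr fun a ha => ?_
    exact Finset.mem_compl.mpr (Finset.mem_sdiff.mp ha).2
  · intro F' hF'
    refine Finset.mem_filter.mpr ⟨Finset.mem_univ _, Finset.subset_union_left⟩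
  · intro F hF
    exact Finset.union_sdiff_of_subset (Finset.mem_filter.mp hF).2
  · intro F' hF'
    refine Finset.union_sdiff_cancel_left ?_
    refine Finset.disjoint_left.mpr fun a ha ha' => ?_
    exact (Finset.mem_compl.mp (Finset.mem_powerset.mp hF' ha')) ha
  · intro F hF
    rw [Finset.union_sdiff_of_subset (Finset.mem_filter.mp hF).2]

noncomputable def graphEquiv (n : ℕ) :
    SimpleGraph (Fin n) ≃ Finset {e : Sym2 (Fin n) // ¬ e.IsDiag} where
  toFun G := Finset.univ.filter (fun e => (e : Sym2 (Fin n)) ∈ G.edgeSet)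
  invFun F := SimpleGraph.fromEdgeSet (Subtype.val '' (F : Set {e : Sym2 (Fin n) // ¬ e.IsDiag}))
  left_inv G := by
    have key : Subtype.val '' ((Finset.univ.filter
        (fun e : {e : Sym2 (Fin n) // ¬ e.IsDiag} => (e : Sym2 (Fin n)) ∈ G.edgeSet) : Finset _) :
        Set {e : Sym2 (Fin n) // ¬ e.IsDiag}) = G.edgeSet := by
      ext e
      simp only [Set.mem_image, Finset.coe_filter, Set.mem_setOf_eq, Finset.mem_univ, true_and]
      constructor
      · rintro ⟨x, hx, rfl⟩; exact hx
      · intro he; exact ⟨⟨e, G.not_isDiag_of_mem_edgeSet he⟩, he, rfl⟩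
    show fromEdgeSet _ = G
    rw [key, SimpleGraph.fromEdgeSet_edgeSet]
  right_inv F := by
    dsimp only
    ext e
    simp only [Finset.mem_filter, Finset.mem_univ, true_and, SimpleGraph.edgeSet_fromEdgeSet,
      Set.mem_diff, Set.mem_image, Set.mem_setOf_eq, Finset.mem_coe]
    constructor
    · rintro ⟨⟨x, hx, hxe⟩, _⟩
      rwa [← Subtype.ext hxe.symm] at hx
    · intro he
      exact ⟨⟨e, he, rfl⟩, e.2⟩

lemma graphEquiv_card {n : ℕ} (G : SimpleGraph (Fin n)) :
    (graphEquiv n G).card = G.edgeSet.ncard := by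
  have key : Subtype.val '' ((graphEquiv n G : Finset _) :
      Set {e : Sym2 (Fin n) // ¬ e.IsDiag}) = G.edgeSet := by
    ext e
    simp only [graphEquiv, Equiv.coe_fn_mk, Set.mem_image, Finset.coe_filter,
      Set.mem_setOf_eq, Finset.mem_univ, true_and]
    constructor
    · rintro ⟨x, hx, rfl⟩; exact hx
    · intro he; exact ⟨⟨e, G.not_isDiag_of_mem_edgeSet he⟩, he, rfl⟩
  rw [← key, Set.ncard_image_of_injective _ Subtype.val_injective, Set.ncard_coe_finset]

lemma graphEquiv_subset {n : ℕ} (G : SimpleGraph (Fin n))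
    (S : Finset {e : Sym2 (Fin n) // ¬ e.IsDiag}) :
    S ⊆ graphEquiv n G ↔ ∀ e ∈ S, (e : Sym2 (Fin n)) ∈ G.edgeSet := by
  simp [graphEquiv, Finset.subset_iff]
lemma erProb_le_sum {n : ℕ} {p : ℝ} (hp0 : 0 ≤ p) (hp1 : p ≤ 1)
    (A : Set (SimpleGraph (Fin n))) {ι : Type*} (I : Finset ι)
    (S : ι → Finset {e : Sym2 (Fin n) // ¬ e.IsDiag})
    (hcov : ∀ G ∈ A, ∃ i ∈ I, ∀ e ∈ S i, (e : Sym2 (Fin n)) ∈ G.edgeSet) :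
    erProb n p A ≤ ∑ i ∈ I, p ^ (S i).card := by
  set w : SimpleGraph (Fin n) → ℝ :=
    fun G => p ^ G.edgeSet.ncard * (1 - p) ^ (n.choose 2 - G.edgeSet.ncard) with hwdef
  have hw : ∀ G, 0 ≤ w G := fun G =>
    mul_nonneg (pow_nonneg hp0 _) (pow_nonneg (by linarith) _)
  have hpt : ∀ G, A.indicator w G ≤ ∑ i ∈ I, (if S i ⊆ graphEquiv n G then w G else 0) := by
    intro G
    by_cases hG : G ∈ A
    · rw [Set.indicator_of_mem hG]
      obtain ⟨i0, hi0, hcov0⟩ := hcov G hG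
      refine le_trans ?_ (Finset.single_le_sum
        (f := fun i => if S i ⊆ graphEquiv n G then w G else 0)
        (fun i _ => by
          show (0:ℝ) ≤ if S i ⊆ graphEquiv n G then w G else 0
          split_ifs; exacts [hw G, le_refl 0]) hi0)
      show w G ≤ if S i0 ⊆ graphEquiv n G then w G else 0
      rw [if_pos ((graphEquiv_subset G (S i0)).mpr hcov0)]
    · rw [Set.indicator_of_notMem hG]
      refine Finset.sum_nonneg fun i _ => ?_
      show (0:ℝ) ≤ if S i ⊆ graphEquiv n G then w G else 0
      split_ifs; exacts [hw G, le_refl 0]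
  have hm : Fintype.card {e : Sym2 (Fin n) // ¬ e.IsDiag} = n.choose 2 := by
    rw [Sym2.card_subtype_not_diag, Fintype.card_fin]
  calc erProb n p A ≤ ∑ G : SimpleGraph (Fin n), ∑ i ∈ I,
        (if S i ⊆ graphEquiv n G then w G else 0) := Finset.sum_le_sum fun G _ => hpt G
    _ = ∑ i ∈ I, ∑ G : SimpleGraph (Fin n), (if S i ⊆ graphEquiv n G then w G else 0) :=
        Finset.sum_comm
    _ = ∑ i ∈ I, p ^ (S i).card := by
        refine Finset.sum_congr rfl fun i _ => ?_
        have h1 : ∀ G : SimpleGraph (Fin n), (if S i ⊆ graphEquiv n G then w G else 0)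
            = (fun F : Finset {e : Sym2 (Fin n) // ¬ e.IsDiag} =>
                if S i ⊆ F then p ^ F.card * (1-p) ^ (Fintype.card {e : Sym2 (Fin n) // ¬ e.IsDiag} - F.card) else 0)
              (graphEquiv n G) := by
          intro G
          simp only [graphEquiv_card, hm, hwdef]
        rw [Finset.sum_congr rfl (fun G _ => h1 G)]
        rw [Equiv.sum_comp (graphEquiv n) (fun F : Finset {e : Sym2 (Fin n) // ¬ e.IsDiag} =>
          if S i ⊆ F then p ^ F.card * (1-p) ^ (Fintype.card {e : Sym2 (Fin n) // ¬ e.IsDiag} - F.card) else 0)]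
        rw [sum_subset_weight]
        simp

lemma pow_div_factorial_le_exp (x : ℝ) (hx : 0 ≤ x) (j : ℕ) :
    x ^ j / j.factorial ≤ Real.exp x :=
  le_trans (Finset.single_le_sum (f := fun i => x ^ i / i.factorial)
    (fun i _ => by positivity) (Finset.self_mem_range_succ j))
    (Real.sum_le_exp_of_nonneg hx (j + 1))

lemma choose_le_exp_pow (n t : ℕ) (ht : 1 ≤ t) :
    (n.choose t : ℝ) ≤ (Real.exp 1 * n / t) ^ t := by
  have ht0 : (0:ℝ) < t := by exact_mod_cast ht
  have h1 : (n.choose t : ℝ) ≤ (n:ℝ) ^ t / t.factorial := by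
    have := Nat.choose_le_pow_div (α := ℝ) t n
    push_cast at this ⊢
    exact this
  have h2 : (t:ℝ) ^ t / t.factorial ≤ Real.exp t := pow_div_factorial_le_exp t (by positivity) t
  have h3 : ((n:ℝ)) ^ t / t.factorial = ((n:ℝ) / t) ^ t * ((t:ℝ) ^ t / t.factorial) := by
    rw [div_pow]
    have : (t:ℝ)^t ≠ 0 := by positivity
    have : ((t.factorial :ℝ)) ≠ 0 := by positivity
    field_simp
  have h4 : Real.exp (t:ℕ) = Real.exp 1 ^ (t:ℕ) := by
    rw [← Real.exp_nat_mul]; norm_num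
  calc (n.choose t : ℝ) ≤ (n:ℝ) ^ t / t.factorial := h1
    _ = ((n:ℝ) / t) ^ t * ((t:ℝ) ^ t / t.factorial) := h3
    _ ≤ ((n:ℝ) / t) ^ t * Real.exp t := by
        refine mul_le_mul_of_nonneg_left h2 (by positivity)
    _ = (Real.exp 1 * n / t) ^ t := by
        rw [h4, ← mul_pow]
        congr 1
        ring

noncomputable def edgesIn (n : ℕ) (T : Finset (Fin n)) :
    Finset {e : Sym2 (Fin n) // ¬ e.IsDiag} :=
  Finset.univ.filter (fun e => ∀ v ∈ (e : Sym2 (Fin n)), v ∈ T)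

lemma edgesIn_card_le (n : ℕ) (T : Finset (Fin n)) :
    (edgesIn n T).card ≤ T.card * T.card := by
  have h1 : (edgesIn n T).card ≤ T.sym2.card := by
    refine Finset.card_le_card_of_injOn (fun e => (e : Sym2 (Fin n))) ?_ ?_
    · intro e he
      simp only [Finset.mem_coe, Finset.mem_sym2_iff] at he ⊢
      exact (Finset.mem_filter.mp he).2
    · exact fun a _ b _ h => Subtype.val_injective h
  rw [Finset.card_sym2] at h1
  calc (edgesIn n T).card ≤ (T.card + 1).choose 2 := h1
    _ ≤ T.card * T.card := by
        rw [Nat.choose_two_right]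
        simp only [Nat.add_sub_cancel]
        rw [Nat.div_le_iff_le_mul_add_pred (by norm_num)]
        nlinarith

lemma induce_ncard_le (n : ℕ) (G : SimpleGraph (Fin n)) (T : Set (Fin n)) :
    (G.induce T).edgeSet.ncard ≤ (Finset.univ.filter
      (fun e : {e : Sym2 (Fin n) // ¬ e.IsDiag} =>
        (∀ v ∈ (e : Sym2 (Fin n)), v ∈ T) ∧ (e : Sym2 (Fin n)) ∈ G.edgeSet)).card := by
  set F0 := Finset.univ.filter
      (fun e : {e : Sym2 (Fin n) // ¬ e.IsDiag} =>
        (∀ v ∈ (e : Sym2 (Fin n)), v ∈ T) ∧ (e : Sym2 (Fin n)) ∈ G.edgeSet) with hF0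
  have hinj : Function.Injective (Sym2.map (Subtype.val : T → Fin n)) :=
    Sym2.map.injective Subtype.val_injective
  have h1 : (G.induce T).edgeSet.ncard
      = (Sym2.map Subtype.val '' (G.induce T).edgeSet).ncard :=
    (Set.ncard_image_of_injective _ hinj).symm
  have h2 : Sym2.map Subtype.val '' (G.induce T).edgeSet
      ⊆ Subtype.val '' (F0 : Set {e : Sym2 (Fin n) // ¬ e.IsDiag}) := by
    rintro x ⟨e, he, rfl⟩
    induction e with
    | _ a b =>
      have hadj : G.Adj a b := (SimpleGraph.mem_edgeSet _).mp he
      have hne : (a : Fin n) ≠ b := hadj.ne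
      have hnd : ¬ (s((a : Fin n), (b : Fin n))).IsDiag := by
        rw [Sym2.mk_isDiag_iff]; exact hne
      refine ⟨⟨s((a : Fin n), (b : Fin n)), hnd⟩, ?_, by simp [Sym2.map_pair_eq]⟩
      rw [hF0]
      simp only [Finset.coe_filter, Set.mem_setOf_eq, Finset.mem_univ, true_and]
      refine ⟨?_, (SimpleGraph.mem_edgeSet _).mpr hadj⟩
      intro v hv
      rcases Sym2.mem_iff.mp hv with h | h
      · rw [h]; exact a.2
      · rw [h]; exact b.2
  calc (G.induce T).edgeSet.ncard
      = (Sym2.map Subtype.val '' (G.induce T).edgeSet).ncard := h1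
    _ ≤ (Subtype.val '' (F0 : Set {e : Sym2 (Fin n) // ¬ e.IsDiag})).ncard :=
        Set.ncard_le_ncard h2 (Set.toFinite _)
    _ = F0.card := by
        rw [Set.ncard_image_of_injective _ Subtype.val_injective, Set.ncard_coe_finset]
/-- For every `c > 0` and `ε > 0` there exists `δ > 0` such that for all
sufficiently large `n` and every integer `t` with `1 ≤ t ≤ δ n`, the probability that
`G ∈ 𝒢(n, c/n)` contains a vertex set `T` with `|T| = t` spanning at least `(1 + ε/4)t`
edges is at most `exp(-ε t log(n/t) / 8)`. -/

theorem er_dense_set_probability (c ε : ℝ) (hc : 0 < c) (hε : 0 < ε) :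
    ∃ δ > (0 : ℝ), ∀ᶠ n : ℕ in atTop, ∀ t : ℕ, 1 ≤ t → (t : ℝ) ≤ δ * n →
      erProb n (c / n) {G | ∃ T : Set (Fin n), T.ncard = t ∧
          (1 + ε / 4) * t ≤ ((G.induce T).edgeSet.ncard : ℝ)}
        ≤ Real.exp (-(ε * t * Real.log (n / t)) / 8) := by
  set B : ℝ := 1 + |Real.log c| with hB
  set L0 : ℝ := 8 / ε * (1 + (1 + ε / 4) * B) + B + 1 with hL0
  have hB1 : 1 ≤ B := by simp [hB]
  have hL0pos : 0 < L0 := by rw [hL0]; positivity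
  refine ⟨Real.exp (-L0), Real.exp_pos _, ?_⟩
  have hev1 : ∀ᶠ n : ℕ in atTop, 1 ≤ n := eventually_ge_atTop 1
  have hev2 : ∀ᶠ n : ℕ in atTop, c ≤ (n : ℝ) :=
    tendsto_natCast_atTop_atTop.eventually_ge_atTop c
  filter_upwards [hev1, hev2] with n hn1 hnc
  intro t ht1 ht2
  -- basic positivity
  have htR : (1:ℝ) ≤ t := by exact_mod_cast ht1
  have ht0 : (0:ℝ) < t := by linarith
  have hn0 : (0:ℝ) < n := by exact_mod_cast Nat.lt_of_lt_of_le Nat.zero_lt_one hn1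
  have hp0 : (0:ℝ) ≤ c / n := by positivity
  have hp1 : c / n ≤ 1 := (div_le_one hn0).mpr hnc
  set k : ℕ := ⌈(1 + ε / 4) * t⌉₊ with hk
  have hkR : (1 + ε / 4) * t ≤ (k : ℝ) := Nat.le_ceil _
  have hkt : t ≤ k := by
    have : (t : ℝ) ≤ (k : ℝ) := le_trans (by nlinarith) hkR
    exact_mod_cast this
  have hk1 : 1 ≤ k := le_trans ht1 hkt
  -- the covering family
  set I : Finset (Σ _ : Finset (Fin n), Finset {e : Sym2 (Fin n) // ¬ e.IsDiag}) :=
    (Finset.univ.powersetCard t).sigma (fun T => (edgesIn n T).powersetCard k) with hI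
  have hcov : ∀ G ∈ {G : SimpleGraph (Fin n) | ∃ T : Set (Fin n), T.ncard = t ∧
      (1 + ε / 4) * t ≤ ((G.induce T).edgeSet.ncard : ℝ)},
      ∃ i ∈ I, ∀ e ∈ i.2, (e : Sym2 (Fin n)) ∈ G.edgeSet := by
    intro G hG
    obtain ⟨T, hT1, hT2⟩ := hG
    have hkn : k ≤ (G.induce T).edgeSet.ncard := Nat.ceil_le.mpr hT2
    have hF0 := induce_ncard_le n G T
    obtain ⟨S0, hS0sub, hS0card⟩ := Finset.exists_subset_card_eq (le_trans hkn hF0)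
    have hS0 : ∀ e ∈ S0, (∀ v ∈ (e : Sym2 (Fin n)), v ∈ T) ∧ (e : Sym2 (Fin n)) ∈ G.edgeSet :=
      fun e he => (Finset.mem_filter.mp (hS0sub he)).2
    refine ⟨⟨T.toFinset, S0⟩, ?_, fun e he => (hS0 e he).2⟩
    refine Finset.mem_sigma.mpr ⟨?_, ?_⟩
    · refine Finset.mem_powersetCard_univ.mpr ?_
      rw [← Set.ncard_eq_toFinset_card' T, hT1]
    · refine Finset.mem_powersetCard.mpr ⟨?_, hS0card⟩
      intro e he
      refine Finset.mem_filter.mpr ⟨Finset.mem_univ _, fun v hv => ?_⟩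
      exact Set.mem_toFinset.mpr ((hS0 e he).1 v hv)
  have step1 : erProb n (c / n) {G : SimpleGraph (Fin n) | ∃ T : Set (Fin n), T.ncard = t ∧
      (1 + ε / 4) * t ≤ ((G.induce T).edgeSet.ncard : ℝ)}
      ≤ (I.card : ℝ) * (c / n) ^ k := by
    refine le_trans (erProb_le_sum hp0 hp1 _ I (fun i => i.2) hcov) ?_
    have : ∀ i ∈ I, (c / n) ^ i.2.card = (c / n) ^ k := by
      intro i hi
      rw [(Finset.mem_powersetCard.mp (Finset.mem_sigma.mp hi).2).2]
    rw [Finset.sum_congr rfl this, Finset.sum_const, nsmul_eq_mul]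
  have hIcard : I.card ≤ n.choose t * ((t * t).choose k) := by
    rw [hI, Finset.card_sigma]
    have hb : ∀ T ∈ Finset.univ.powersetCard t (α := Fin n),
        ((edgesIn n T).powersetCard k).card ≤ (t * t).choose k := by
      intro T hT
      rw [Finset.card_powersetCard]
      refine Nat.choose_le_choose k ?_
      have := edgesIn_card_le n T
      rwa [Finset.mem_powersetCard_univ.mp hT] at this
    calc ∑ T ∈ Finset.univ.powersetCard t (α := Fin n), ((edgesIn n T).powersetCard k).card
        ≤ ∑ _T ∈ Finset.univ.powersetCard t (α := Fin n), (t * t).choose k :=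
          Finset.sum_le_sum hb
      _ = n.choose t * ((t * t).choose k) := by
          rw [Finset.sum_const, Finset.card_powersetCard, Finset.card_univ, Fintype.card_fin,
            smul_eq_mul]
  -- numeric estimates
  set L : ℝ := Real.log ((n : ℝ) / t) with hL
  have hnt : Real.exp L0 ≤ (n : ℝ) / t := by
    have h1 : (n:ℝ) / (Real.exp (-L0) * n) ≤ (n:ℝ) / t :=
      div_le_div_of_nonneg_left hn0.le ht0 ht2
    have h2 : (n:ℝ) / (Real.exp (-L0) * n) = Real.exp L0 := by
      rw [Real.exp_neg]
      field_simp
    linarith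
  have hLge : L0 ≤ L := by
    rw [hL]
    exact (Real.le_log_iff_exp_le (by positivity)).mpr hnt
  have hch1 : (n.choose t : ℝ) ≤ (Real.exp 1 * n / t) ^ t := choose_le_exp_pow n t ht1
  have hch2 : (((t * t).choose k : ℕ) : ℝ) ≤ (Real.exp 1 * (t * t) / k) ^ k := by
    have := choose_le_exp_pow (t * t) k hk1
    push_cast at this ⊢
    exact this
  have hk0 : (0:ℝ) < k := by exact_mod_cast hk1
  have base2 : Real.exp 1 * ((t:ℝ) * t) / k * (c / n) ≤ Real.exp 1 * t * c / n := by
    rw [div_mul_div_comm]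
    rw [div_le_div_iff₀ (by positivity) (by positivity)]
    have : (t:ℝ) ≤ k := by exact_mod_cast hkt
    have h6 : (t:ℝ)*t ≤ (t:ℝ)*k := mul_le_mul_of_nonneg_left this ht0.le
    nlinarith [mul_le_mul_of_nonneg_right h6 (by positivity : (0:ℝ) ≤ Real.exp 1 * c * n)]
  have step2 : (I.card : ℝ) * (c / n) ^ k
      ≤ (Real.exp 1 * n / t) ^ t * (Real.exp 1 * t * c / n) ^ k := by
    have hIR : (I.card : ℝ) ≤ (n.choose t : ℝ) * (((t * t).choose k : ℕ) : ℝ) := by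
      exact_mod_cast hIcard
    calc (I.card : ℝ) * (c / n) ^ k
        ≤ ((n.choose t : ℝ) * (((t * t).choose k : ℕ) : ℝ)) * (c / n) ^ k := by
          exact mul_le_mul_of_nonneg_right hIR (by positivity)
      _ ≤ ((Real.exp 1 * n / t) ^ t * (Real.exp 1 * (t * t) / k) ^ k) * (c / n) ^ k := by
          refine mul_le_mul_of_nonneg_right ?_ (by positivity)
          exact mul_le_mul hch1 hch2 (by positivity) (by positivity)
      _ = (Real.exp 1 * n / t) ^ t * (Real.exp 1 * ((t:ℝ) * t) / k * (c / n)) ^ k := by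
          rw [mul_assoc, ← mul_pow]
      _ ≤ (Real.exp 1 * n / t) ^ t * (Real.exp 1 * t * c / n) ^ k := by
          refine mul_le_mul_of_nonneg_left ?_ (by positivity)
          exact pow_le_pow_left₀ (by positivity) base2 k
  have hexp1 : Real.exp 1 * n / t = Real.exp (1 + L) := by
    rw [Real.exp_add, hL, Real.exp_log (by positivity)]
    ring
  have hexp2 : Real.exp 1 * t * c / n = Real.exp (1 + Real.log c - L) := by
    have : Real.exp (1 + Real.log c - L) = Real.exp 1 * c * ((n:ℝ)/t)⁻¹ := by
      rw [sub_eq_add_neg, Real.exp_add, Real.exp_add, Real.exp_log hc, Real.exp_neg, hL,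
        Real.exp_log (by positivity)]
    rw [this]
    field_simp
  have step3 : (Real.exp 1 * n / t) ^ t * (Real.exp 1 * t * c / n) ^ k
      = Real.exp ((t:ℝ) * (1 + L) + (k:ℝ) * (1 + Real.log c - L)) := by
    rw [hexp1, hexp2, ← Real.exp_nat_mul, ← Real.exp_nat_mul, ← Real.exp_add]
  have arith : (t:ℝ) * (1 + L) + (k:ℝ) * (1 + Real.log c - L)
      ≤ -(ε * t * L) / 8 := by
    have habs1 : Real.log c ≤ |Real.log c| := le_abs_self _
    have hLB : 1 + Real.log c - L ≤ 0 := by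
      have ha : 1 + Real.log c ≤ B := by rw [hB]; linarith
      have hb' : 0 ≤ 8 / ε * (1 + (1 + ε / 4) * B) := by positivity
      have hc' : B + 1 ≤ L0 := by rw [hL0]; linarith
      linarith
    have hstep : (k:ℝ) * (1 + Real.log c - L) ≤ ((1 + ε/4) * t) * (1 + Real.log c - L) :=
      mul_le_mul_of_nonpos_right hkR hLB
    have hmul : (t:ℝ) * (1 + (1 + ε/4) * (1 + Real.log c)) ≤ (t:ℝ) * ((ε/8) * L) := by
      refine mul_le_mul_of_nonneg_left ?_ ht0.le
      have h3 : 1 + (1 + ε/4) * (1 + Real.log c) ≤ 1 + (1 + ε/4) * B := by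
        have : 1 + Real.log c ≤ B := by rw [hB]; linarith
        nlinarith
      have h4 : 1 + (1 + ε/4) * B ≤ (ε/8) * L0 := by
        have hX : (ε/8) * (8/ε * (1 + (1 + ε/4) * B)) = 1 + (1 + ε/4) * B := by
          field_simp
        nlinarith [hB1, hε]
      have h5 : (ε/8) * L0 ≤ (ε/8) * L := by
        refine mul_le_mul_of_nonneg_left hLge (by positivity)
      linarith
    nlinarith [hstep, hmul]
  refine le_trans step1 (le_trans step2 ?_)
  rw [step3, Real.exp_le_exp]
  exact arith
end
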